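/- arXiv:quant-ph/0506099 — 6 statements merged into one kernel-verified Lean document; each statement's English description precedes it below -/
import Mathlib

section
/- Let V be a finite-dimensional real vector space, C ⊆ V a regular cone, λ a linear functional on V with λ(x) > 0 for every x ∈ C∖{0}, and W* a linear subspace of the dual space V* with λ ∈ W*. Let π : V → (W*)* be the restriction map defined by π(η)(a) = a(η) for a ∈ W*. Then D := π(C) is a regular cone in (W*)*, the evaluation functional y ↦ y(λ) is strictly positive on D∖{0}, and π maps {x ∈ C : λ(x) = 1} onto {y ∈ D : y(λ) = 1}. -/
/-- Instance-search workaround for current Mathlib (same term as `Submodule.addCommGroup W`). -/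
instance stmt_2_addCommGroup_aux {V : Type*} [NormedAddCommGroup V] [NormedSpace ℝ V]
    (W : Submodule ℝ (V →L[ℝ] ℝ)) : AddCommGroup W :=
  Submodule.addCommGroup W

open Module

noncomputable def evalCLM (E : Type*) [NormedAddCommGroup E] [NormedSpace ℝ E] :
    E →ₗ[ℝ] Module.Dual ℝ (E →L[ℝ] ℝ) where
  toFun η :=
    { toFun := fun g => g η
      map_add' := by intro g h; simp
      map_smul' := by intro c g; simp }
  map_add' x y := by ext g; simp
  map_smul' c x := by ext g; simp

lemma evalCLM_surjective (E : Type*) [NormedAddCommGroup E] [NormedSpace ℝ E]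
    [FiniteDimensional ℝ E] : Function.Surjective (evalCLM E) := by
  have hinj : Function.Injective (evalCLM E) := by
    rw [← LinearMap.ker_eq_bot, Submodule.eq_bot_iff]
    intro x hx
    by_contra hx0
    obtain ⟨g, -, hg⟩ := exists_dual_vector ℝ x (norm_ne_zero_iff.mpr hx0)
    have : g x = 0 := congrFun (congrArg DFunLike.coe hx) g
    rw [hg] at this
    exact hx0 (norm_eq_zero.mp this)
  have hfd : FiniteDimensional ℝ (E →L[ℝ] ℝ) :=
    (LinearMap.toContinuousLinearMap (E := E) (F' := ℝ)).finiteDimensional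
  have hfr : finrank ℝ E = finrank ℝ (Module.Dual ℝ (E →L[ℝ] ℝ)) := by
    rw [Subspace.dual_finrank_eq,
      ← (LinearMap.toContinuousLinearMap (E := E) (F' := ℝ)).finrank_eq,
      Subspace.dual_finrank_eq]
  exact (LinearMap.injective_iff_surjective_of_finrank_eq_finrank hfr).mp hinj

set_option maxHeartbeats 1000000 in
set_option synthInstance.maxHeartbeats 200000 in
/-- restriction of the states on a regular cone `C` to a subspace
`W` of the (continuous) dual containing the order unit `lam` yields a regular
cone `D = π(C)` in the dual of `W`, on which evaluation at `lam` is strictly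
positive, and the normalized states of `C` map onto the normalized states of
`D`. -/
theorem stmt_2 {V : Type*} [NormedAddCommGroup V] [NormedSpace ℝ V] [FiniteDimensional ℝ V]
    (C : Set V)
    (hsmul : ∀ t : ℝ, 0 ≤ t → ∀ x ∈ C, t • x ∈ C)
    (hconv : Convex ℝ C)
    (hspan : Submodule.span ℝ C = ⊤)
    (hpointed : C ∩ (-C) = {0})
    (hclosed : IsClosed C)
    (lam : V →L[ℝ] ℝ) (hlam : ∀ x ∈ C, x ≠ 0 → 0 < lam x)
    (W : Submodule ℝ (V →L[ℝ] ℝ)) (hlamW : lam ∈ W)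
    (π : V → (W →L[ℝ] ℝ))
    (hπ : ∀ (η : V) (a : W), π η a = (a : V →L[ℝ] ℝ) η)
    (D : Set (W →L[ℝ] ℝ)) (hD : D = π '' C) :
    (∀ t : ℝ, 0 ≤ t → ∀ y ∈ D, t • y ∈ D) ∧
    Convex ℝ D ∧
    Submodule.span ℝ D = ⊤ ∧
    D ∩ (-D) = {0} ∧
    IsClosed D ∧
    (∀ y ∈ D, y ≠ 0 → 0 < y ⟨lam, hlamW⟩) ∧
    π '' {x ∈ C | lam x = 1} = {y ∈ D | y ⟨lam, hlamW⟩ = 1} := by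
  -- π as a linear map
  set L : V →ₗ[ℝ] (W →L[ℝ] ℝ) :=
    { toFun := π
      map_add' := by
        intro x y; ext a
        simp [hπ]
      map_smul' := by
        intro c x; ext a
        simp [hπ] } with hLdef
  have hLπ : ∀ x, L x = π x := fun _ => rfl
  have hπ0 : π 0 = 0 := by rw [← hLπ]; exact L.map_zero
  have h0C : (0 : V) ∈ C := by
    have : (0 : V) ∈ ({0} : Set V) := rfl
    rw [← hpointed] at this; exact this.1
  have h0D : (0 : W →L[ℝ] ℝ) ∈ D := by
    rw [hD]; exact ⟨0, h0C, hπ0⟩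
  have hlam0 : ∀ x ∈ C, 0 ≤ lam x := by
    intro x hx
    rcases eq_or_ne x 0 with rfl | hx0
    · simp
    · exact (hlam x hx hx0).le
  -- evaluation at lam
  -- 1. smul
  have part1 : ∀ t : ℝ, 0 ≤ t → ∀ y ∈ D, t • y ∈ D := by
    intro t ht y hy
    rw [hD] at hy ⊢
    obtain ⟨x, hx, rfl⟩ := hy
    exact ⟨t • x, hsmul t ht x hx, by rw [← hLπ, ← hLπ, L.map_smul]⟩
  -- 2. convexity
  have part2 : Convex ℝ D := by
    rw [hD]
    have : π '' C = L '' C := rfl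
    rw [this]
    exact hconv.linear_image L
  -- 3. span
  have hLsurj : Function.Surjective L := by
    intro g
    obtain ⟨gext, hgext⟩ := LinearMap.exists_extend (g.toLinearMap : W →ₗ[ℝ] ℝ)
    obtain ⟨η, hη⟩ := evalCLM_surjective V gext
    refine ⟨η, ?_⟩
    ext a
    have h1 : π η a = (a : V →L[ℝ] ℝ) η := hπ η a
    have h2 : gext (a : V →L[ℝ] ℝ) = g a := congrFun (congrArg DFunLike.coe hgext) a
    have h3 : gext (a : V →L[ℝ] ℝ) = (a : V →L[ℝ] ℝ) η := by rw [← hη]; rfl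
    rw [hLπ, h1, ← h3, h2]
  have part3 : Submodule.span ℝ D = ⊤ := by
    rw [hD]
    have : π '' C = L '' C := rfl
    rw [this, Submodule.span_image, hspan, Submodule.map_top, LinearMap.range_eq_top.mpr hLsurj]
  -- 4. pointed
  have part4 : D ∩ (-D) = {0} := by
    apply Set.eq_singleton_iff_unique_mem.mpr
    constructor
    · exact ⟨h0D, by
        rw [Set.mem_neg]
        have e : -(0 : W →L[ℝ] ℝ) = 0 := by ext v; simp
        rw [e]; exact h0D⟩
    · rintro y ⟨hy, hny⟩
      rw [hD] at hy hny
      obtain ⟨x, hx, hxy⟩ := hy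
      have hny' : -y ∈ π '' C := hny
      obtain ⟨x', hx', hxy'⟩ := hny'
      have e1 : y ⟨lam, hlamW⟩ = lam x := by rw [← hxy, hπ]
      have e2 : (-y) ⟨lam, hlamW⟩ = lam x' := by rw [← hxy', hπ]
      have e3 : lam x + lam x' = 0 := by
        rw [← e1, ← e2]; simp
      have hx0 : lam x = 0 := by linarith [hlam0 x hx, hlam0 x' hx']
      have : x = 0 := by
        by_contra h
        exact absurd hx0 (ne_of_gt (hlam x hx h))
      rw [← hxy, this, hπ0]
  -- positivity bound: ∃ m > 0, ∀ x ∈ C, m * ‖x‖ ≤ lam x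
  have hbound : ∃ m : ℝ, 0 < m ∧ ∀ x ∈ C, m * ‖x‖ ≤ lam x := by
    by_cases hne : (C ∩ Metric.sphere 0 1).Nonempty
    · have hScomp : IsCompact (C ∩ Metric.sphere (0 : V) 1) :=
        (isCompact_sphere 0 1).of_isClosed_subset
          (hclosed.inter Metric.isClosed_sphere) Set.inter_subset_right
      obtain ⟨x₀, hx₀, hmin⟩ := hScomp.exists_isMinOn hne lam.continuous.continuousOn
      have hx₀0 : x₀ ≠ 0 := by
        intro h
        have := hx₀.2
        rw [h] at this
        simp at this
      refine ⟨lam x₀, hlam x₀ hx₀.1 hx₀0, ?_⟩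
      intro x hx
      rcases eq_or_ne x 0 with rfl | hx0
      · simp
      · have hnx : (0 : ℝ) < ‖x‖ := norm_pos_iff.mpr hx0
        have hmem : ‖x‖⁻¹ • x ∈ C ∩ Metric.sphere 0 1 := by
          refine ⟨hsmul _ (inv_nonneg.mpr hnx.le) x hx, ?_⟩
          simp [norm_smul, abs_of_pos (inv_pos.mpr hnx), inv_mul_cancel₀ hnx.ne']
        have h4 : lam x₀ ≤ ‖x‖⁻¹ * lam x := by simpa using hmin hmem
        calc lam x₀ * ‖x‖ ≤ (‖x‖⁻¹ * lam x) * ‖x‖ :=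
            mul_le_mul_of_nonneg_right h4 hnx.le
          _ = lam x := by field_simp
    · refine ⟨1, one_pos, ?_⟩
      intro x hx
      rcases eq_or_ne x 0 with rfl | hx0
      · simp
      · exfalso
        apply hne
        have hnx : (0 : ℝ) < ‖x‖ := norm_pos_iff.mpr hx0
        exact ⟨‖x‖⁻¹ • x, hsmul _ (inv_nonneg.mpr hnx.le) x hx,
          by simp [norm_smul, abs_of_pos (inv_pos.mpr hnx), inv_mul_cancel₀ hnx.ne']⟩
  obtain ⟨m, hm, hmC⟩ := hbound
  -- 5. closed
  have part5 : IsClosed D := by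
    have key : ∀ (E : Type _) [SeminormedAddCommGroup E] [NormedSpace ℝ E]
        (D : Set (E →L[ℝ] ℝ)), IsSeqClosed D → IsClosed D :=
      fun _ _ _ _ h => h.isClosed
    apply key W D
    intro f y hf hfy
    have hex : ∀ n, ∃ x ∈ C, π x = f n := by
      intro n
      have := hf n
      rw [hD] at this
      obtain ⟨x, hx, hxf⟩ := this
      exact ⟨x, hx, hxf⟩
    choose x hxC hxf using hex
    -- boundedness of lam (x n)
    have hcontev : Continuous fun (z : W →L[ℝ] ℝ) => z ⟨lam, hlamW⟩ :=
      (ContinuousLinearMap.apply ℝ ℝ (⟨lam, hlamW⟩ : W)).continuous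
    have htend : Filter.Tendsto (fun n => lam (x n)) Filter.atTop (nhds (y ⟨lam, hlamW⟩)) := by
      have : (fun n => lam (x n)) = fun n => (f n) ⟨lam, hlamW⟩ := by
        funext n; rw [← hxf n, hπ]
      rw [this]
      exact (hcontev.tendsto y).comp hfy
    obtain ⟨B, hB⟩ := htend.bddAbove_range
    have hxballC : ∀ n, x n ∈ C ∩ Metric.closedBall 0 (B / m) := by
      intro n
      refine ⟨hxC n, ?_⟩
      rw [Metric.mem_closedBall, dist_zero_right]
      have h1 : m * ‖x n‖ ≤ lam (x n) := hmC _ (hxC n)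
      have h2 : lam (x n) ≤ B := hB ⟨n, rfl⟩
      rw [le_div_iff₀ hm, mul_comm]
      linarith
    have hbd : Bornology.IsBounded (C ∩ Metric.closedBall (0 : V) (B / m)) :=
      (Metric.isBounded_closedBall).subset Set.inter_subset_right
    obtain ⟨a, ha, φ, hφ, haf⟩ := tendsto_subseq_of_bounded hbd hxballC
    have haC : a ∈ C := by
      have hcl : IsClosed (C ∩ Metric.closedBall (0 : V) (B / m)) :=
        hclosed.inter Metric.isClosed_closedBall
      exact (hcl.closure_eq ▸ ha).1
    have hπcont : Continuous π := L.continuous_of_finiteDimensional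
    have h1 : Filter.Tendsto (fun n => π (x (φ n))) Filter.atTop (nhds (π a)) :=
      (hπcont.tendsto a).comp haf
    have h2 : Filter.Tendsto (fun n => π (x (φ n))) Filter.atTop (nhds y) := by
      have : (fun n => π (x (φ n))) = f ∘ φ := by funext n; exact hxf (φ n)
      rw [this]
      exact hfy.comp hφ.tendsto_atTop
    have : π a = y := tendsto_nhds_unique h1 h2
    rw [hD]
    exact ⟨a, haC, this⟩
  -- 6. positivity
  have part6 : ∀ y ∈ D, y ≠ 0 → 0 < y ⟨lam, hlamW⟩ := by
    intro y hy hy0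
    rw [hD] at hy
    obtain ⟨x, hx, rfl⟩ := hy
    have hx0 : x ≠ 0 := by
      intro h; rw [h, hπ0] at hy0; exact hy0 rfl
    rw [hπ]
    exact hlam x hx hx0
  -- 7. states
  have part7 : π '' {x ∈ C | lam x = 1} = {y ∈ D | y ⟨lam, hlamW⟩ = 1} := by
    ext y
    constructor
    · rintro ⟨x, ⟨hxC', hx1⟩, rfl⟩
      exact ⟨hD ▸ ⟨x, hxC', rfl⟩, by rw [hπ]; exact hx1⟩
    · rintro ⟨hyD, hy1⟩
      rw [hD] at hyD
      obtain ⟨x, hx, rfl⟩ := hyD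
      exact ⟨x, ⟨hx, by rw [hπ] at hy1; exact hy1⟩, rfl⟩
  exact ⟨part1, part2, part3, part4, part5, part6, part7⟩
end

section
/- Every regular cone K in a finite-dimensional real vector space is positively generated by its extreme rays: every element of K is a finite nonnegative linear combination of elements lying on extreme rays of K. -/
/-- A ray of a cone `K`: the set of nonnegative multiples of some element of
`K`. -/
def IsRayOf {V : Type*} [AddCommGroup V] [Module ℝ V] (K R : Set V) : Prop :=
  ∃ x ∈ K, R = {y : V | ∃ t : ℝ, 0 ≤ t ∧ y = t • x}

/-- An extreme ray of a cone `K`: a ray `R` of `K` such that no nonzero element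
of `R` is a convex combination of elements of `K` not lying in `R`. -/
def IsExtremeRay {V : Type*} [AddCommGroup V] [Module ℝ V] (K R : Set V) : Prop :=
  IsRayOf K R ∧ ∀ y ∈ R, y ≠ 0 → y ∉ convexHull ℝ (K \ R)

open Set Filter Topology

/-- The set of points lying on some extreme ray of `K`. -/
def exRayPts {V : Type*} [AddCommGroup V] [Module ℝ V] (K : Set V) : Set V :=
  {v | ∃ R : Set V, IsExtremeRay K R ∧ v ∈ R}

section Basic
variable {V : Type*} [AddCommGroup V] [Module ℝ V]

lemma exRayPts_smul {K : Set V} {v : V} (hv : v ∈ exRayPts K) {t : ℝ} (ht : 0 ≤ t) :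
    t • v ∈ exRayPts K := by
  obtain ⟨R, hR, hvR⟩ := hv
  refine ⟨R, hR, ?_⟩
  obtain ⟨x₀, _, rfl⟩ := hR.1
  obtain ⟨s, hs, rfl⟩ := hvR
  exact ⟨t * s, mul_nonneg ht hs, (mul_smul t s x₀).symm⟩

lemma closure_smul_mem {K : Set V} {y : V} (hy : y ∈ AddSubmonoid.closure (exRayPts K))
    {t : ℝ} (ht : 0 ≤ t) : t • y ∈ AddSubmonoid.closure (exRayPts K) := by
  induction hy using AddSubmonoid.closure_induction with
  | mem z hz => exact AddSubmonoid.subset_closure (exRayPts_smul hz ht)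
  | zero => simpa using AddSubmonoid.zero_mem _
  | add a b _ _ ha hb => simpa [smul_add] using AddSubmonoid.add_mem _ ha hb

end Basic

section Face
variable {V : Type*} [NormedAddCommGroup V] [NormedSpace ℝ V]

/-- An extreme ray of an exposed face `{z ∈ K | g z = 0}` (where `g ≤ 0` on `K`)
is an extreme ray of `K`. -/
lemma isExtremeRay_of_face {K : Set V} (g : V →L[ℝ] ℝ) (hgK : ∀ z ∈ K, g z ≤ 0)
    {R : Set V} (hR : IsExtremeRay {z | z ∈ K ∧ g z = 0} R) : IsExtremeRay K R := by
  obtain ⟨⟨x₀, hx₀, rfl⟩, hext⟩ := hR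
  refine ⟨⟨x₀, hx₀.1, rfl⟩, ?_⟩
  rintro y hy hy0 hmem
  rw [convexHull_eq] at hmem
  obtain ⟨ι, t, w, z, hw0, hw1, hz, hcm⟩ := hmem
  have hgy : g y = 0 := by
    obtain ⟨s, hs, rfl⟩ := hy
    simp [hx₀.2]
  have hsum : ∑ i ∈ t, w i * g (z i) = 0 := by
    have : g (t.centerMass w z) = ∑ i ∈ t, w i * g (z i) := by
      rw [Finset.centerMass_eq_of_sum_1 _ _ hw1, map_sum]
      simp
    rw [hcm] at this
    rw [← this, hgy]
  have hterm : ∀ i ∈ t, w i ≠ 0 → g (z i) = 0 := by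
    have h := (Finset.sum_eq_zero_iff_of_nonpos (fun i hi => ?_)).1 hsum
    · intro i hi hwi
      have := h i hi
      rcases mul_eq_zero.1 this with h' | h'
      · exact absurd h' hwi
      · exact h'
    · exact mul_nonpos_of_nonneg_of_nonpos (hw0 i hi) (hgK _ (hz i hi).1)
  have hy' : y ∈ convexHull ℝ ({z | z ∈ K ∧ g z = 0} \
      {y : V | ∃ t : ℝ, 0 ≤ t ∧ y = t • x₀}) := by
    rw [← hcm, ← Finset.centerMass_filter_ne_zero]
    refine Finset.centerMass_mem_convexHull _ (fun i hi => hw0 i (Finset.mem_filter.1 hi).1)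
      ?_ (fun i hi => ?_)
    · rw [Finset.sum_filter_ne_zero, hw1]; exact zero_lt_one
    · obtain ⟨hit, hwi⟩ := Finset.mem_filter.1 hi
      exact ⟨⟨(hz i hit).1, hterm i hit hwi⟩, (hz i hit).2⟩
  exact hext y hy hy0 hy'

/-- Extreme rays are preserved by the inclusion of a submodule. -/
lemma isExtremeRay_image (W : Submodule ℝ V) {K R : Set W} (h : IsExtremeRay K R) :
    IsExtremeRay ((↑) '' K : Set V) ((↑) '' R) := by
  obtain ⟨⟨x₀, hx₀, rfl⟩, hext⟩ := h
  constructor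
  · refine ⟨(x₀ : V), ⟨x₀, hx₀, rfl⟩, ?_⟩
    ext y
    constructor
    · rintro ⟨y', ⟨s, hs, rfl⟩, rfl⟩
      exact ⟨s, hs, by simp⟩
    · rintro ⟨s, hs, rfl⟩
      exact ⟨s • x₀, ⟨s, hs, rfl⟩, by simp⟩
  · rintro y ⟨y', hy', rfl⟩ hy0 hmem
    have hdiff : ((↑) '' K : Set V) \ ((↑) '' {y : W | ∃ t : ℝ, 0 ≤ t ∧ y = t • x₀})
        = (↑) '' (K \ {y : W | ∃ t : ℝ, 0 ≤ t ∧ y = t • x₀}) :=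
      (Set.image_diff Subtype.coe_injective _ _).symm
    have himg : convexHull ℝ ((↑) '' (K \ {y : W | ∃ t : ℝ, 0 ≤ t ∧ y = t • x₀}) : Set V)
        = (↑) '' (convexHull ℝ (K \ {y : W | ∃ t : ℝ, 0 ≤ t ∧ y = t • x₀})) := by
      have := W.subtype.image_convexHull (K \ {y : W | ∃ t : ℝ, 0 ≤ t ∧ y = t • x₀})
      simpa using this.symm
    rw [hdiff, himg] at hmem
    obtain ⟨y'', hy''mem, hy''eq⟩ := hmem
    have : y'' = y' := Subtype.coe_injective hy''eq
    subst this
    exact hext y'' hy' (fun h0 => hy0 (by simp [h0])) hy''mem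

lemma mem_of_not_bddAbove {K : Set V} (hclosed : IsClosed K)
    (hsmul : ∀ t : ℝ, 0 ≤ t → ∀ x ∈ K, t • x ∈ K) {x u : V}
    (h : ¬ BddAbove {t : ℝ | x + t • u ∈ K}) : u ∈ K := by
  have hex : ∀ n : ℕ, ∃ t : ℝ, (n + 1 : ℝ) ≤ t ∧ x + t • u ∈ K := by
    intro n
    rcases not_bddAbove_iff.1 h (n + 1 : ℝ) with ⟨t, ht, hlt⟩
    exact ⟨t, hlt.le, ht⟩
  choose f hf1 hf2 using hex
  have hfpos : ∀ n, 0 < f n := fun n =>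
    lt_of_lt_of_le (by positivity) (hf1 n)
  have hmem : ∀ n, (f n)⁻¹ • x + u ∈ K := by
    intro n
    have := hsmul (f n)⁻¹ (inv_nonneg.2 (hfpos n).le) _ (hf2 n)
    rwa [smul_add, smul_smul, inv_mul_cancel₀ (hfpos n).ne', one_smul] at this
  have htend : Tendsto (fun n => (f n)⁻¹ • x + u) atTop (𝓝 u) := by
    have h1 : Tendsto (fun n => (f n)⁻¹) atTop (𝓝 0) := by
      refine tendsto_of_tendsto_of_tendsto_of_le_of_le tendsto_const_nhds
        tendsto_one_div_add_atTop_nhds_zero_nat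
        (fun n => (inv_nonneg).2 (hfpos n).le) (fun n => ?_)
      rw [one_div]
      exact inv_anti₀ (by positivity) (hf1 n)
    have : Tendsto (fun n => (f n)⁻¹ • x) atTop (𝓝 ((0:ℝ) • x)) := h1.smul_const x
    rw [zero_smul] at this
    simpa using this.add_const u
  exact hclosed.mem_of_tendsto htend (Eventually.of_forall hmem)

end Face

universe u

theorem cone_main : ∀ (n : ℕ) (V : Type u) [NormedAddCommGroup V] [NormedSpace ℝ V]
    [FiniteDimensional ℝ V], Module.finrank ℝ V ≤ n → ∀ (K : Set V),
    (∀ t : ℝ, 0 ≤ t → ∀ x ∈ K, t • x ∈ K) → Convex ℝ K →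
    Submodule.span ℝ K = ⊤ → K ∩ (-K) = {0} → IsClosed K →
    ∀ x ∈ K, x ∈ AddSubmonoid.closure (exRayPts K) := by
  intro n
  induction n with
  | zero =>
    intro V _ _ _ hr K _ _ _ _ _ x _
    have hsub : Subsingleton V := by
      rw [← Module.finrank_zero_iff (R := ℝ)]
      omega
    have : x = 0 := Subsingleton.elim x 0
    rw [this]
    exact AddSubmonoid.zero_mem _
  | succ n ih =>
    intro V _ _ _ hr K hsmul hconv hspan hpointed hclosed x hx
    by_cases hx0 : x = 0
    · rw [hx0]; exact AddSubmonoid.zero_mem _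
    have h0K : (0 : V) ∈ K := by simpa using hsmul 0 le_rfl x hx
    by_cases hdim : Module.finrank ℝ V ≤ 1
    -- dimension ≤ 1 : K is itself an extreme ray
    · have hxspan : Submodule.span ℝ ({x} : Set V) = ⊤ := by
        have h1 : Module.finrank ℝ (Submodule.span ℝ ({x} : Set V)) = 1 :=
          finrank_span_singleton hx0
        apply Submodule.eq_top_of_finrank_eq
        have h2 : 1 ≤ Module.finrank ℝ V := by
          have := Submodule.finrank_le (Submodule.span ℝ ({x} : Set V))
          omega
        omega
      have hKR : K = {y : V | ∃ t : ℝ, 0 ≤ t ∧ y = t • x} := by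
        ext z
        constructor
        · intro hz
          have hzmem : z ∈ Submodule.span ℝ ({x} : Set V) := by
            rw [hxspan]; exact Submodule.mem_top
          obtain ⟨c, hc⟩ := Submodule.mem_span_singleton.1 hzmem
          rcases le_or_gt 0 c with hc0 | hc0
          · exact ⟨c, hc0, hc.symm⟩
          · have hneg : -z ∈ K := by
              have := hsmul (-c) (by linarith) x hx
              rwa [show (-c) • x = -z by rw [neg_smul, hc]] at this
            have : z ∈ K ∩ (-K) := ⟨hz, by simpa [Set.mem_neg] using hneg⟩
            rw [hpointed] at this
            exact ⟨0, le_rfl, by simp [Set.mem_singleton_iff.1 this]⟩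
        · rintro ⟨t, ht, rfl⟩
          exact hsmul t ht x hx
      apply AddSubmonoid.subset_closure
      refine ⟨{y : V | ∃ t : ℝ, 0 ≤ t ∧ y = t • x}, ⟨⟨x, hx, rfl⟩, ?_⟩,
        ⟨1, zero_le_one, (one_smul ℝ x).symm⟩⟩
      intro y _ _ hmem
      rw [← hKR] at hmem
      simp [Set.diff_self] at hmem
    -- dimension ≥ 2
    push_neg at hdim
    have hint : (interior K).Nonempty := by
      rw [hconv.interior_nonempty_iff_affineSpan_eq_top]
      have h1 : (affineSpan ℝ (insert (0:V) K) : Set V) = (Submodule.span ℝ K : Set V) :=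
        affineSpan_insert_zero K
      rw [Set.insert_eq_of_mem h0K] at h1
      apply SetLike.coe_injective
      rw [AffineSubspace.top_coe, h1, hspan, Submodule.top_coe]
    obtain ⟨a, ha⟩ := hint
    -- Step 1: every point of K outside the interior is a sum of extreme ray points.
    have hfront : ∀ p, p ∈ K → p ∉ interior K → p ∈ AddSubmonoid.closure (exRayPts K) := by
      intro p hp hpi
      obtain ⟨g, hg⟩ := geometric_hahn_banach_open_point hconv.interior isOpen_interior hpi
      have hgle : ∀ z ∈ K, g z ≤ g p := by
        intro z hz
        have hcomb : ∀ t : ℝ, t ∈ Set.Ioc (0:ℝ) 1 → g (t • a + (1 - t) • z) < g p := by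
          intro t ht
          exact hg _ (hconv.combo_interior_closure_mem_interior ha (subset_closure hz)
            ht.1 (by linarith [ht.2]) (by ring))
        have htd : Tendsto (fun t : ℝ => g (t • a + (1 - t) • z)) (𝓝[>] 0)
            (𝓝 (g ((0:ℝ) • a + (1 - (0:ℝ)) • z))) := by
          have hc : Continuous fun t : ℝ => g (t • a + (1 - t) • z) := by fun_prop
          exact (hc.tendsto 0).mono_left nhdsWithin_le_nhds
        simp only [zero_smul, sub_zero, one_smul, zero_add] at htd
        refine le_of_tendsto htd ?_
        filter_upwards [Ioc_mem_nhdsGT_of_mem ⟨le_rfl, zero_lt_one⟩] with t ht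
          using (hcomb t ht).le
      have hgp : g p = 0 := by
        have h1 : (0:ℝ) ≤ g p := by simpa using hgle 0 h0K
        have h2 : g ((2:ℝ) • p) ≤ g p := hgle _ (hsmul 2 (by norm_num) p hp)
        rw [map_smul, smul_eq_mul] at h2
        linarith
      have hgneg : ∀ z ∈ K, g z ≤ 0 := fun z hz => hgp ▸ hgle z hz
      have hga : g a < 0 := hgp ▸ hg a ha
      set K' : Set V := {z | z ∈ K ∧ g z = 0} with hK'def
      set W : Submodule ℝ V := Submodule.span ℝ K' with hWdef
      have hK'W : K' ⊆ (W : Set V) := Submodule.subset_span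
      have hWle : W ≤ LinearMap.ker (g : V →ₗ[ℝ] ℝ) := Submodule.span_le.2 (fun z hz => hz.2)
      have hWrank : Module.finrank ℝ W ≤ n := by
        have h1 : Module.finrank ℝ W ≤ Module.finrank ℝ (LinearMap.ker (g : V →ₗ[ℝ] ℝ)) :=
          Submodule.finrank_mono hWle
        have h2 : LinearMap.ker (g : V →ₗ[ℝ] ℝ) < ⊤ := by
          rw [lt_top_iff_ne_top]
          intro htop
          have : a ∈ LinearMap.ker (g : V →ₗ[ℝ] ℝ) := htop ▸ Submodule.mem_top
          rw [LinearMap.mem_ker] at this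
          exact absurd this (by simpa using hga.ne)
        have h3 := Submodule.finrank_lt (K := ℝ) (V := V) h2.ne
        omega
      set K'' : Set W := ((↑) ⁻¹' K' : Set W) with hK''def
      have himgK'' : ((↑) '' K'' : Set V) = K' := by
        ext z
        constructor
        · rintro ⟨⟨z', hz'W⟩, hz', rfl⟩
          exact hz'
        · intro hz
          exact ⟨⟨z, hK'W hz⟩, hz, rfl⟩
      have hsmul'' : ∀ t : ℝ, 0 ≤ t → ∀ y ∈ K'', t • y ∈ K'' := by
        rintro t ht ⟨z, hzW⟩ hz
        exact ⟨hsmul t ht z hz.1, by rw [Submodule.coe_smul, map_smul, hz.2, smul_zero]⟩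
      have hconv'' : Convex ℝ K'' := by
        rintro ⟨y1, h1W⟩ hy1 ⟨y2, h2W⟩ hy2 s t hs ht hst
        refine ⟨hconv hy1.1 hy2.1 hs ht hst, ?_⟩
        show g (s • y1 + t • y2) = 0
        rw [map_add, map_smul, map_smul, hy1.2, hy2.2, smul_zero, smul_zero, add_zero]
      have hclosed'' : IsClosed K'' := by
        have hK'c : IsClosed K' :=
          hclosed.inter (isClosed_eq g.continuous continuous_const)
        exact hK'c.preimage continuous_subtype_val
      have hspan'' : Submodule.span ℝ K'' = ⊤ := by
        apply Submodule.map_injective_of_injective (Submodule.injective_subtype W)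
        rw [Submodule.map_span, Submodule.map_top, Submodule.range_subtype]
        have : (W.subtype '' K'' : Set V) = K' := by simpa using himgK''
        rw [this]
      have hpointed'' : K'' ∩ (-K'') = {0} := by
        ext ⟨z, hzW⟩
        constructor
        · rintro ⟨hz1, hz2⟩
          have hz2' : -z ∈ K' := by
            have : (-(⟨z, hzW⟩ : W)) ∈ K'' := hz2
            exact this
          have : z ∈ K ∩ (-K) := ⟨hz1.1, by simpa [Set.mem_neg] using hz2'.1⟩
          rw [hpointed] at this
          apply Set.mem_singleton_iff.2
          apply Subtype.ext
          simpa using Set.mem_singleton_iff.1 this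
        · intro hz
          have hz0 : (⟨z, hzW⟩ : W) = 0 := by simpa using hz
          rw [hz0]
          constructor
          · exact ⟨h0K, by simp⟩
          · show -(0 : W) ∈ K''
            rw [neg_zero]
            exact ⟨h0K, by simp⟩
      have hp' : p ∈ K' := ⟨hp, hgp⟩
      have hres := ih W hWrank K'' hsmul'' hconv'' hspan'' hpointed'' hclosed''
        ⟨p, hK'W hp'⟩ hp'
      have hsub : ((↑) '' exRayPts K'' : Set V) ⊆ exRayPts K := by
        rintro _ ⟨v, ⟨R, hR, hvR⟩, rfl⟩
        have h1 := isExtremeRay_image W hR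
        rw [himgK''] at h1
        exact ⟨(↑) '' R, isExtremeRay_of_face g hgneg h1, ⟨v, hvR, rfl⟩⟩
      have hmap : p ∈ AddSubmonoid.closure ((↑) '' exRayPts K'' : Set V) := by
        have := AddSubmonoid.mem_map_of_mem W.subtype.toAddMonoidHom hres
        rwa [AddMonoidHom.map_mclosure] at this
      exact AddSubmonoid.closure_mono hsub hmap
    -- Step 2: the interior case
    by_cases hxi : x ∈ interior K
    swap
    · exact hfront x hx hxi
    -- find a direction leaving the cone on both sides
    have hune : ∃ u : V, u ∉ K ∧ u ∉ -K := by
      by_contra hcon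
      push_neg at hcon
      have hrank1 : 1 < Module.rank ℝ V := by
        rw [← Module.finrank_eq_rank]
        exact_mod_cast (by omega : 1 < Module.finrank ℝ V)
      have hconn := isConnected_compl_singleton_of_one_lt_rank hrank1 (0 : V)
      have hmxK : -x ∉ K := by
        intro h
        apply hx0
        have : x ∈ K ∩ (-K) := ⟨hx, by simpa [Set.mem_neg] using h⟩
        rw [hpointed] at this
        exact this
      have hxmK : x ∉ -K := by
        intro h
        apply hx0
        have : x ∈ K ∩ (-K) := ⟨hx, h⟩
        rw [hpointed] at this
        exact this
      obtain ⟨z, hz0, hz1, hz2⟩ := hconn.isPreconnected Kᶜ (-K)ᶜ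
        hclosed.isOpen_compl hclosed.neg.isOpen_compl
        (fun z hz => by
          by_contra hboth
          rw [Set.mem_union] at hboth
          push_neg at hboth
          simp only [Set.mem_compl_iff, not_not] at hboth
          have : z ∈ K ∩ (-K) := ⟨hboth.1, hboth.2⟩
          rw [hpointed] at this
          exact hz this)
        ⟨-x, by simp [hx0], hmxK⟩ ⟨x, by simp [hx0], hxmK⟩
      exact hz2 (hcon z hz1)
    obtain ⟨u, huK, humK⟩ := hune
    set T := {t : ℝ | x + t • u ∈ K} with hTdef
    have hTclosed : IsClosed T := by
      have hc : Continuous fun t : ℝ => x + t • u := by fun_prop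
      exact hclosed.preimage hc
    have h0T : (0:ℝ) ∈ T := by simp [hTdef, hx]
    have hbddA : BddAbove T := by
      by_contra h
      exact huK (mem_of_not_bddAbove hclosed hsmul h)
    have hbddB : BddBelow T := by
      by_contra h
      apply humK
      rw [Set.mem_neg]
      apply mem_of_not_bddAbove hclosed hsmul (x := x) (u := -u)
      intro hbd
      obtain ⟨b, hb⟩ := hbd
      apply h
      refine ⟨-b, fun t ht => ?_⟩
      have : -t ∈ {t : ℝ | x + t • (-u) ∈ K} := by
        simpa [hTdef, neg_smul, smul_neg] using ht
      have := hb this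
      linarith
    set sa := sInf T with hsa
    set sb := sSup T with hsb
    have haT : sa ∈ T := hTclosed.csInf_mem ⟨0, h0T⟩ hbddB
    have hbT : sb ∈ T := hTclosed.csSup_mem ⟨0, h0T⟩ hbddA
    obtain ⟨ε, hε, hball⟩ := Metric.isOpen_iff.1 isOpen_interior x hxi
    set δ := ε / (2 * (‖u‖ + 1)) with hδdef
    have hδpos : 0 < δ := by positivity
    have hwig : ∀ s : ℝ, |s| ≤ δ → x + s • u ∈ K := by
      intro s hs
      apply interior_subset
      apply hball
      rw [Metric.mem_ball, dist_eq_norm]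
      have : x + s • u - x = s • u := by abel
      rw [this, norm_smul]
      have h1 : ‖s‖ * ‖u‖ ≤ δ * ‖u‖ := by
        apply mul_le_mul_of_nonneg_right _ (norm_nonneg u)
        rwa [Real.norm_eq_abs]
      have h2 : δ * ‖u‖ < ε := by
        rw [hδdef]
        rw [div_mul_eq_mul_div, div_lt_iff₀ (by positivity)]
        nlinarith [norm_nonneg u]
      linarith
    have hδT : δ ∈ T := hwig δ (by rw [abs_of_pos hδpos])
    have hmδT : -δ ∈ T := hwig (-δ) (by rw [abs_neg, abs_of_pos hδpos])
    have hsa' : sa ≤ -δ := csInf_le hbddB hmδT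
    have hsb' : δ ≤ sb := le_csSup hbddA hδT
    have hba : 0 < sb - sa := by linarith
    set p := x + sa • u with hpdef
    set q := x + sb • u with hqdef
    have hpfront : p ∉ interior K := by
      intro hpint
      obtain ⟨ε', hε', hball'⟩ := Metric.isOpen_iff.1 isOpen_interior p hpint
      set δ' := ε' / (2 * (‖u‖ + 1)) with hδ'def
      have hδ'pos : 0 < δ' := by positivity
      have : sa - δ' ∈ T := by
        have hmem : x + (sa - δ') • u ∈ Metric.ball p ε' := by
          rw [Metric.mem_ball, dist_eq_norm]
          have : x + (sa - δ') • u - p = (-δ') • u := by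
            rw [hpdef]; rw [sub_smul, neg_smul]; abel
          rw [this, norm_smul]
          have h1 : ‖(-δ' : ℝ)‖ = δ' := by
            rw [Real.norm_eq_abs, abs_neg, abs_of_pos hδ'pos]
          rw [h1]
          rw [hδ'def, div_mul_eq_mul_div, div_lt_iff₀ (by positivity)]
          nlinarith [norm_nonneg u]
        show x + (sa - δ') • u ∈ K
        exact interior_subset (hball' hmem)
      have := csInf_le hbddB this
      rw [← hsa] at this
      linarith
    have hqfront : q ∉ interior K := by
      intro hqint
      obtain ⟨ε', hε', hball'⟩ := Metric.isOpen_iff.1 isOpen_interior q hqint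
      set δ' := ε' / (2 * (‖u‖ + 1)) with hδ'def
      have hδ'pos : 0 < δ' := by positivity
      have : sb + δ' ∈ T := by
        have hmem : x + (sb + δ') • u ∈ Metric.ball q ε' := by
          rw [Metric.mem_ball, dist_eq_norm]
          have : x + (sb + δ') • u - q = δ' • u := by
            rw [hqdef]; rw [add_smul]; abel
          rw [this, norm_smul]
          have h1 : ‖(δ' : ℝ)‖ = δ' := by
            rw [Real.norm_eq_abs, abs_of_pos hδ'pos]
          rw [h1]
          rw [hδ'def, div_mul_eq_mul_div, div_lt_iff₀ (by positivity)]
          nlinarith [norm_nonneg u]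
        show x + (sb + δ') • u ∈ K
        exact interior_subset (hball' hmem)
      have := le_csSup hbddA this
      rw [← hsb] at this
      linarith
    have hpcl := hfront p haT hpfront
    have hqcl := hfront q hbT hqfront
    have hco : x = (sb / (sb - sa)) • p + (-sa / (sb - sa)) • q := by
      rw [hpdef, hqdef]
      have hba' : sb - sa ≠ 0 := hba.ne'
      match_scalars
      · field_simp
        ring
      · field_simp
        ring
    rw [hco]
    exact AddSubmonoid.add_mem _
      (closure_smul_mem hpcl (div_nonneg (by linarith) hba.le))
      (closure_smul_mem hqcl (div_nonneg (by linarith) hba.le))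

/-- every regular cone `K` in a finite-dimensional real vector
space is positively generated by its extreme rays: every element of `K` is a
finite nonnegative linear combination of elements lying on extreme rays of
`K`. -/
theorem stmt_6 {V : Type*} [NormedAddCommGroup V] [NormedSpace ℝ V] [FiniteDimensional ℝ V]
    (K : Set V)
    (hsmul : ∀ t : ℝ, 0 ≤ t → ∀ x ∈ K, t • x ∈ K)
    (hconv : Convex ℝ K)
    (hspan : Submodule.span ℝ K = ⊤)
    (hpointed : K ∩ (-K) = {0})
    (hclosed : IsClosed K) :
    ∀ x ∈ K, ∃ (m : ℕ) (c : Fin m → ℝ) (v : Fin m → V),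
      (∀ i, 0 ≤ c i) ∧
      (∀ i, ∃ R : Set V, IsExtremeRay K R ∧ v i ∈ R) ∧
      x = ∑ i, c i • v i := by
  intro x hx
  have hmem := cone_main (Module.finrank ℝ V) V le_rfl K hsmul hconv hspan hpointed hclosed x hx
  obtain ⟨l, hl, hsum⟩ := AddSubmonoid.exists_list_of_mem_closure hmem
  refine ⟨l.length, fun _ => 1, l.get, fun i => zero_le_one, fun i => hl _ (l.get_mem i), ?_⟩
  simp only [one_smul]
  have h1 : ∑ i : Fin l.length, l.get i = (List.ofFn l.get).sum := (List.sum_ofFn).symm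
  rw [List.ofFn_get] at h1
  rw [← hsum]
  exact h1.symm
end

section
/- Let (V, W, C, D, λ, λ̃, π) be a cone-pair. Let G ⊆ V be the topological closure of the set of finite nonnegative linear combinations of elements y ∈ C such that y lies on an extreme ray of C and π(y) lies on an extreme ray of D. Then the set of normalized generalized unentangled states — the closure of the convex hull of those extreme points x of Ĉ := C ∩ {λ = 1} for which π(x) is an extreme point of D̂ := D ∩ {λ̃ = 1} — is exactly G ∩ {x : λ(x) = 1}. -/
/-- A cone-pair: finite-dimensional real normed spaces `V`, `W`, regular cones
`C ⊆ V`, `D ⊆ W`, linear functionals `lam`, `lam'` strictly positive on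
`C \ {0}`, `D \ {0}` respectively, and a linear map `pi` with `pi(C) = D`
mapping the affine plane `{lam = 1}` onto `{lam' = 1}`. -/
structure ConePair (V W : Type*) [NormedAddCommGroup V] [NormedSpace ℝ V]
    [NormedAddCommGroup W] [NormedSpace ℝ W] where
  C : Set V
  D : Set W
  lam : V →ₗ[ℝ] ℝ
  lam' : W →ₗ[ℝ] ℝ
  pi : V →ₗ[ℝ] W
  smul_mem_C : ∀ t : ℝ, 0 ≤ t → ∀ x ∈ C, t • x ∈ C
  convex_C : Convex ℝ C
  span_C : Submodule.span ℝ C = ⊤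
  pointed_C : C ∩ (-C) = {0}
  closed_C : IsClosed C
  smul_mem_D : ∀ t : ℝ, 0 ≤ t → ∀ y ∈ D, t • y ∈ D
  convex_D : Convex ℝ D
  span_D : Submodule.span ℝ D = ⊤
  pointed_D : D ∩ (-D) = {0}
  closed_D : IsClosed D
  lam_pos : ∀ x ∈ C, x ≠ 0 → 0 < lam x
  lam'_pos : ∀ y ∈ D, y ≠ 0 → 0 < lam' y
  pi_image : pi '' C = D
  pi_plane : pi '' {x : V | lam x = 1} = {y : W | lam' y = 1}

/-- The set of finite nonnegative linear combinations of elements of `S`. -/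
def nonnegCombos {V : Type*} [AddCommGroup V] [Module ℝ V] (S : Set V) : Set V :=
  {x : V | ∃ (m : ℕ) (c : Fin m → ℝ) (v : Fin m → V),
    (∀ i, 0 ≤ c i) ∧ (∀ i, v i ∈ S) ∧ x = ∑ i, c i • v i}


open Pointwise

section Aux

variable {V : Type*} [AddCommGroup V] [Module ℝ V]

lemma nonnegCombos_subset (S : Set V) : S ⊆ nonnegCombos S := by
  intro x hx
  exact ⟨1, fun _ => 1, fun _ => x, fun _ => zero_le_one, fun _ => hx, by simp⟩

lemma nonnegCombos_smul {S : Set V} {t : ℝ} (ht : 0 ≤ t) {x : V}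
    (hx : x ∈ nonnegCombos S) : t • x ∈ nonnegCombos S := by
  obtain ⟨m, c, v, hc, hv, rfl⟩ := hx
  exact ⟨m, fun i => t * c i, v, fun i => mul_nonneg ht (hc i), hv, by
    rw [Finset.smul_sum]; simp [smul_smul]⟩

lemma nonnegCombos_add {S : Set V} {x y : V}
    (hx : x ∈ nonnegCombos S) (hy : y ∈ nonnegCombos S) :
    x + y ∈ nonnegCombos S := by
  obtain ⟨m, c, v, hc, hv, rfl⟩ := hx
  obtain ⟨n, d, w, hd, hw, rfl⟩ := hy
  refine ⟨m + n, Fin.append c d, Fin.append v w, ?_, ?_, ?_⟩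
  · intro i
    rcases lt_or_ge i.1 m with h | h
    · have : i = Fin.castAdd n ⟨i.1, h⟩ := by ext; rfl
      rw [this, Fin.append_left]; exact hc _
    · have : i = Fin.natAdd m ⟨i.1 - m, by omega⟩ := by ext; simp; omega
      rw [this, Fin.append_right]; exact hd _
  · intro i
    rcases lt_or_ge i.1 m with h | h
    · have : i = Fin.castAdd n ⟨i.1, h⟩ := by ext; rfl
      rw [this, Fin.append_left]; exact hv _
    · have : i = Fin.natAdd m ⟨i.1 - m, by omega⟩ := by ext; simp; omega
      rw [this, Fin.append_right]; exact hw _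
  · rw [Fin.sum_univ_add]
    simp [Fin.append_left, Fin.append_right]

lemma nonnegCombos_convex (S : Set V) : Convex ℝ (nonnegCombos S) := by
  intro x hx y hy a b ha hb _
  exact nonnegCombos_add (nonnegCombos_smul ha hx) (nonnegCombos_smul hb hy)

lemma rayOf_smul {K R : Set V} (h : IsRayOf K R) {y : V} (hy : y ∈ R) {t : ℝ}
    (ht : 0 ≤ t) : t • y ∈ R := by
  obtain ⟨x₀, _, rfl⟩ := h
  obtain ⟨s, hs, rfl⟩ := hy
  exact ⟨t * s, mul_nonneg ht hs, by rw [smul_smul]⟩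

lemma zero_mem_ray {K R : Set V} (h : IsRayOf K R) : (0 : V) ∈ R := by
  obtain ⟨x₀, _, rfl⟩ := h
  exact ⟨0, le_refl 0, (zero_smul ℝ x₀).symm⟩

/-- Lemma A: a point with `lam = 1` on an extreme ray is an extreme point of
the slice. -/
lemma extremePoint_of_extremeRay (K : Set V) (lam : V →ₗ[ℝ] ℝ)
    (hpos : ∀ x ∈ K, x ≠ 0 → 0 < lam x)
    {R : Set V} (hR : IsExtremeRay K R) {x : V} (hxK : x ∈ K) (hx1 : lam x = 1)
    (hxR : x ∈ R) : x ∈ Set.extremePoints ℝ (K ∩ {z : V | lam z = 1}) := by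
  obtain ⟨hray, hext⟩ := hR
  -- any point of R with lam = 1 equals x
  have key : ∀ y ∈ R, lam y = 1 → y = x := by
    obtain ⟨x₀, hx₀K, hRdef⟩ := hray
    intro y hy hy1
    rw [hRdef] at hy hxR
    obtain ⟨s, hs, rfl⟩ := hy
    obtain ⟨t, ht, rfl⟩ := hxR
    have h1 : s * lam x₀ = 1 := by simpa using hy1
    have h2 : t * lam x₀ = 1 := by simpa using hx1
    have hl : lam x₀ ≠ 0 := by
      intro h; rw [h, mul_zero] at h1; norm_num at h1
    have : s = t := by
      have := h1.trans h2.symm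
      exact mul_right_cancel₀ hl this
    rw [this]
  rw [mem_extremePoints]
  refine ⟨⟨hxK, hx1⟩, ?_⟩
  rintro x₁ ⟨hx₁K, hx₁1⟩ x₂ ⟨hx₂K, hx₂1⟩ hseg
  obtain ⟨a, b, ha, hb, hab, hsum⟩ := hseg
  by_cases h1 : x₁ ∈ R
  · have e1 : x₁ = x := key x₁ h1 hx₁1
    have e2 : x₂ = x := by
      rw [e1] at hsum
      have h' : a • x + b • x₂ = (a + b) • x := by rw [hab, one_smul, hsum]
      rw [add_smul] at h'
      exact smul_right_injective V (ne_of_gt hb) (add_left_cancel h')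
    exact ⟨e1, e2⟩
  · by_cases h2 : x₂ ∈ R
    · have e2 : x₂ = x := key x₂ h2 hx₂1
      have e1 : x₁ = x := by
        rw [e2] at hsum
        have h' : a • x₁ + b • x = (a + b) • x := by rw [hab, one_smul, hsum]
        rw [add_smul] at h'
        exact smul_right_injective V (ne_of_gt ha) (add_right_cancel h')
      exact ⟨e1, e2⟩
    · exfalso
      have hx0 : x ≠ 0 := by
        intro h; rw [h] at hx1; simp at hx1
      refine hext x hxR hx0 ?_
      have hsub : ({x₁, x₂} : Set V) ⊆ K \ R := by
        rintro z (rfl | rfl)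
        · exact ⟨hx₁K, h1⟩
        · exact ⟨hx₂K, h2⟩
      refine convexHull_mono hsub ?_
      have : x ∈ segment ℝ x₁ x₂ :=
        ⟨a, b, le_of_lt ha, le_of_lt hb, hab, hsum⟩
      exact (segment_subset_convexHull (by simp) (by simp)) this

/-- Lemma B: an extreme point of the slice lies on an extreme ray. -/
lemma extremeRay_of_extremePoint (K : Set V) (lam : V →ₗ[ℝ] ℝ)
    (hsmul : ∀ t : ℝ, 0 ≤ t → ∀ x ∈ K, t • x ∈ K) (hconv : Convex ℝ K)
    (hpos : ∀ x ∈ K, x ≠ 0 → 0 < lam x) {x : V}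
    (hx : x ∈ Set.extremePoints ℝ (K ∩ {z : V | lam z = 1})) :
    ∃ R : Set V, IsExtremeRay K R ∧ x ∈ R := by
  have hxm := hx.1
  obtain ⟨hxK, hx1⟩ := hxm
  set A : Set V := K ∩ {z : V | lam z = 1} with hA
  have hAconv : Convex ℝ A := hconv.inter (convex_hyperplane lam.isLinear 1)
  set R : Set V := {y : V | ∃ t : ℝ, 0 ≤ t ∧ y = t • x} with hRdef
  have hray : IsRayOf K R := ⟨x, hxK, rfl⟩
  refine ⟨R, ⟨hray, ?_⟩, ⟨1, zero_le_one, (one_smul ℝ x).symm⟩⟩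
  rintro y ⟨t, ht, rfl⟩ hy0 hyHull
  have ht0 : t ≠ 0 := by rintro rfl; simp at hy0
  have htpos : 0 < t := lt_of_le_of_ne ht (Ne.symm ht0)
  -- x ∈ convexHull (K \ R)
  have hxHull : x ∈ convexHull ℝ (K \ R) := by
    have h1 : x ∈ (t⁻¹ • (convexHull ℝ (K \ R)) : Set V) := by
      refine ⟨t • x, hyHull, ?_⟩
      show t⁻¹ • t • x = x
      rw [smul_smul, inv_mul_cancel₀ ht0, one_smul]
    rw [← convexHull_smul] at h1
    refine convexHull_mono ?_ h1
    rintro z ⟨u, ⟨huK, huR⟩, rfl⟩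
    refine ⟨hsmul _ (le_of_lt (inv_pos.mpr htpos)) u huK, ?_⟩
    rintro ⟨s, hs, hsu⟩
    exact huR ⟨t * s, mul_nonneg (le_of_lt htpos) hs, by
      have hsu' : t⁻¹ • u = s • x := hsu
      have : u = t • t⁻¹ • u := by rw [smul_smul, mul_inv_cancel₀ ht0, one_smul]
      rw [this, hsu', smul_smul]⟩
  -- Rewrite it as a centred mass of points in A \ {x}
  rw [convexHull_eq] at hxHull
  obtain ⟨ι, s, w, z, hw0, hw1, hz, hcm⟩ := hxHull
  have hz0 : ∀ i ∈ s, z i ≠ 0 := by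
    intro i hi h0
    exact (hz i hi).2 (h0 ▸ ⟨0, le_refl 0, (zero_smul ℝ x).symm⟩)
  have hlpos : ∀ i ∈ s, 0 < lam (z i) := fun i hi =>
    hpos _ (hz i hi).1 (hz0 i hi)
  set w' : ι → ℝ := fun i => w i * lam (z i) with hw'
  set z' : ι → V := fun i => (lam (z i))⁻¹ • z i with hz'
  have hxsum : ∑ i ∈ s, w i • z i = x := by
    rw [← Finset.centerMass_eq_of_sum_1 _ _ hw1, hcm]
  have hsum' : ∑ i ∈ s, w' i = 1 := by
    have : lam (∑ i ∈ s, w i • z i) = 1 := by rw [hxsum, hx1]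
    rw [map_sum] at this
    simpa [hw', mul_comm] using this
  have hterm : ∀ i ∈ s, w' i • z' i = w i • z i := by
    intro i hi
    have hne : lam (z i) ≠ 0 := ne_of_gt (hlpos i hi)
    simp only [hw', hz', smul_smul]
    congr 1
    field_simp
  have hzA : ∀ i ∈ s, z' i ∈ A \ {x} := by
    intro i hi
    have hne : lam (z i) ≠ 0 := ne_of_gt (hlpos i hi)
    refine ⟨⟨hsmul _ (le_of_lt (inv_pos.mpr (hlpos i hi))) _ (hz i hi).1, ?_⟩, ?_⟩
    · simp [hz', inv_mul_cancel₀ hne]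
    · intro hzx
      have hzx' : z' i = x := hzx
      refine (hz i hi).2 ⟨lam (z i), le_of_lt (hlpos i hi), ?_⟩
      rw [← hzx']
      simp [hz', smul_smul, mul_inv_cancel₀ hne]
  have hmem : x ∈ convexHull ℝ (A \ {x}) := by
    have h := Finset.centerMass_mem_convexHull s
      (fun i hi => mul_nonneg (hw0 i hi) (le_of_lt (hlpos i hi)))
      (by rw [hsum']; norm_num) hzA
    rwa [Finset.centerMass_eq_of_sum_1 _ _ hsum',
      Finset.sum_congr rfl hterm, hxsum] at h
  have := (hAconv.mem_extremePoints_iff_mem_diff_convexHull_diff).mp hx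
  exact this.2 hmem

end Aux

/-- for a cone-pair, let `G` be the closure of the set of finite
nonnegative linear combinations of elements `y ∈ C` lying on an extreme ray of
`C` whose image `π(y)` lies on an extreme ray of `D`.  Then the set of
normalized generalized unentangled states — the closure of the convex hull of
the extreme points `x` of `Ĉ = C ∩ {lam = 1}` with `π(x)` extreme in
`D̂ = D ∩ {lam' = 1}` — equals `G ∩ {lam = 1}`. -/
theorem stmt_8 {V W : Type*} [NormedAddCommGroup V] [NormedSpace ℝ V] [FiniteDimensional ℝ V]
    [NormedAddCommGroup W] [NormedSpace ℝ W] [FiniteDimensional ℝ W]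
    (P : ConePair V W)
    (G : Set V)
    (hG : G = closure (nonnegCombos
      {y : V | y ∈ P.C ∧ (∃ R : Set V, IsExtremeRay P.C R ∧ y ∈ R) ∧
        (∃ R' : Set W, IsExtremeRay P.D R' ∧ P.pi y ∈ R')})) :
    closure (convexHull ℝ
      {x : V | x ∈ Set.extremePoints ℝ (P.C ∩ {z : V | P.lam z = 1}) ∧
        P.pi x ∈ Set.extremePoints ℝ (P.D ∩ {y : W | P.lam' y = 1})}) =
    G ∩ {x : V | P.lam x = 1} := by
  classical
  -- abbreviations
  set S : Set V := {y : V | y ∈ P.C ∧ (∃ R : Set V, IsExtremeRay P.C R ∧ y ∈ R) ∧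
        (∃ R' : Set W, IsExtremeRay P.D R' ∧ P.pi y ∈ R')} with hS
  set E : Set V := {x : V | x ∈ Set.extremePoints ℝ (P.C ∩ {z : V | P.lam z = 1}) ∧
        P.pi x ∈ Set.extremePoints ℝ (P.D ∩ {y : W | P.lam' y = 1})} with hE
  have hlamc : Continuous P.lam := P.lam.continuous_of_finiteDimensional
  have hplane_closed : IsClosed {x : V | P.lam x = 1} :=
    isClosed_eq hlamc continuous_const
  have hplane_convex : Convex ℝ {x : V | P.lam x = 1} :=
    convex_hyperplane P.lam.isLinear 1
  -- image facts
  have hpiD : ∀ x ∈ P.C, P.pi x ∈ P.D := by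
    intro x hx; rw [← P.pi_image]; exact Set.mem_image_of_mem _ hx
  have hpilam : ∀ x : V, P.lam x = 1 → P.lam' (P.pi x) = 1 := by
    intro x hx
    have : P.pi x ∈ P.pi '' {x : V | P.lam x = 1} := Set.mem_image_of_mem _ hx
    rw [P.pi_plane] at this; exact this
  -- E ⊆ S
  have hES : E ⊆ S := by
    rintro x ⟨hx1, hx2⟩
    have hxC : x ∈ P.C := hx1.1.1
    obtain ⟨R, hR, hxR⟩ := extremeRay_of_extremePoint P.C P.lam
      P.smul_mem_C P.convex_C P.lam_pos hx1
    obtain ⟨R', hR', hxR'⟩ := extremeRay_of_extremePoint P.D P.lam'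
      P.smul_mem_D P.convex_D P.lam'_pos hx2
    exact ⟨hxC, ⟨R, hR, hxR⟩, ⟨R', hR', hxR'⟩⟩
  -- the key slice inclusion
  have hslice : nonnegCombos S ∩ {x : V | P.lam x = 1} ⊆ convexHull ℝ E := by
    rintro zz ⟨⟨m, c, v, hc, hv, rfl⟩, hz1⟩
    simp only [Set.mem_setOf_eq] at hz1
    set t : Finset (Fin m) := Finset.univ.filter (fun i => v i ≠ 0) with ht
    set u : Fin m → V := fun i => (P.lam (v i))⁻¹ • v i with hu
    set b : Fin m → ℝ := fun i => c i * P.lam (v i) with hb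
    have hlpos : ∀ i ∈ t, 0 < P.lam (v i) := by
      intro i hi
      rw [ht, Finset.mem_filter] at hi
      exact P.lam_pos _ (hv i).1 hi.2
    have hbz : ∀ i ∈ (Finset.univ : Finset (Fin m)), i ∉ t → b i = 0 := by
      intro i _ hi
      rw [ht, Finset.mem_filter] at hi
      push_neg at hi
      have : v i = 0 := hi (Finset.mem_univ i)
      simp [hb, this]
    have hcz : ∀ i ∈ (Finset.univ : Finset (Fin m)), i ∉ t → c i • v i = 0 := by
      intro i _ hi
      rw [ht, Finset.mem_filter] at hi
      push_neg at hi
      have : v i = 0 := hi (Finset.mem_univ i)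
      simp [this]
    have hsumb : ∑ i ∈ t, b i = 1 := by
      rw [Finset.sum_subset (Finset.filter_subset _ _) hbz]
      have : P.lam (∑ i, c i • v i) = 1 := hz1
      rw [map_sum] at this
      simpa [hb, mul_comm] using this
    have hterm : ∀ i ∈ t, b i • u i = c i • v i := by
      intro i hi
      have hne : P.lam (v i) ≠ 0 := ne_of_gt (hlpos i hi)
      simp only [hb, hu, smul_smul]
      congr 1
      field_simp
    have huE : ∀ i ∈ t, u i ∈ E := by
      intro i hi
      have hne : P.lam (v i) ≠ 0 := ne_of_gt (hlpos i hi)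
      have hinv : (0:ℝ) ≤ (P.lam (v i))⁻¹ := le_of_lt (inv_pos.mpr (hlpos i hi))
      obtain ⟨hviC, ⟨R, hR, hviR⟩, ⟨R', hR', hviR'⟩⟩ := hv i
      have huiC : u i ∈ P.C := P.smul_mem_C _ hinv _ hviC
      have huilam : P.lam (u i) = 1 := by simp [hu, inv_mul_cancel₀ hne]
      have huiR : u i ∈ R := rayOf_smul hR.1 hviR hinv
      have hpiui : P.pi (u i) = (P.lam (v i))⁻¹ • P.pi (v i) := by
        simp [hu]
      have hpiuiR' : P.pi (u i) ∈ R' := by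
        rw [hpiui]; exact rayOf_smul hR'.1 hviR' hinv
      refine ⟨extremePoint_of_extremeRay P.C P.lam P.lam_pos hR huiC huilam huiR, ?_⟩
      exact extremePoint_of_extremeRay P.D P.lam' P.lam'_pos hR'
        (hpiD _ huiC) (hpilam _ huilam) hpiuiR'
    have hcm := Finset.centerMass_mem_convexHull t
      (fun i hi => mul_nonneg (hc i) (le_of_lt (hlpos i hi)))
      (by rw [hsumb]; norm_num) huE
    rwa [Finset.centerMass_eq_of_sum_1 _ _ hsumb, Finset.sum_congr rfl hterm,
      Finset.sum_subset (Finset.filter_subset _ _) hcz] at hcm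
  -- forward inclusion
  apply Set.Subset.antisymm
  · have h1 : convexHull ℝ E ⊆ nonnegCombos S :=
      convexHull_min (hES.trans (nonnegCombos_subset S)) (nonnegCombos_convex S)
    have h2 : convexHull ℝ E ⊆ {x : V | P.lam x = 1} := by
      refine convexHull_min ?_ hplane_convex
      rintro x ⟨hx1, _⟩
      exact hx1.1.2
    rw [hG]
    refine Set.subset_inter ?_ ?_
    · exact closure_mono h1
    · exact closure_minimal h2 hplane_closed
  -- reverse inclusion
  · rintro x ⟨hxG, hx1⟩
    simp only [Set.mem_setOf_eq] at hx1
    rw [hG] at hxG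
    rw [mem_closure_iff_seq_limit] at hxG
    obtain ⟨f, hf, hftend⟩ := hxG
    have hlamtend : Filter.Tendsto (fun n => P.lam (f n)) Filter.atTop (nhds 1) := by
      have := (hlamc.tendsto x).comp hftend
      rwa [hx1] at this
    have hinvtend : Filter.Tendsto (fun n => (P.lam (f n))⁻¹) Filter.atTop (nhds 1) := by
      have := hlamtend.inv₀ one_ne_zero
      simpa using this
    set g : ℕ → V := fun n => (P.lam (f n))⁻¹ • f n with hg
    have hgtend : Filter.Tendsto g Filter.atTop (nhds x) := by
      have := hinvtend.smul hftend
      simpa using this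
    have hev : ∀ᶠ n in Filter.atTop, g n ∈ convexHull ℝ E := by
      have hpos : ∀ᶠ n in Filter.atTop, 0 < P.lam (f n) :=
        hlamtend.eventually (eventually_gt_nhds one_pos)
      filter_upwards [hpos] with n hn
      refine hslice ⟨nonnegCombos_smul (le_of_lt (inv_pos.mpr hn)) (hf n), ?_⟩
      simp [hg, inv_mul_cancel₀ (ne_of_gt hn)]
    exact mem_closure_of_tendsto hgtend hev
end

section
/- Let S be an ℝ-linear subspace of the Hermitian n×n complex matrices, and let P_S be the orthogonal projection of the real inner product space of Hermitian matrices (with trace inner product ⟨A,B⟩ = tr(AB)) onto S. Let ρ be a density matrix with tr(ρ²) = 1 and tr((P_S ρ)²) = 1. Then ρ is generalized unentangled relative to S: the functional X ↦ tr(ρX) on S is an extreme point of the convex set of functionals {X ↦ tr(σX) : σ a density matrix}. -/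
open scoped ComplexOrder
open Matrix
variable {n : ℕ}


lemma aux_spectral {A : Matrix (Fin n) (Fin n) ℂ} (hA : A.IsHermitian) :
    A.trace = ∑ i, (hA.eigenvalues i : ℂ) ∧
    (A * A).trace = ∑ i, (hA.eigenvalues i : ℂ)^2 := by
  set V : Matrix (Fin n) (Fin n) ℂ := (hA.eigenvectorUnitary : Matrix (Fin n) (Fin n) ℂ) with hV
  set D : Matrix (Fin n) (Fin n) ℂ := Matrix.diagonal (RCLike.ofReal ∘ hA.eigenvalues) with hD
  have hst : A = V * D * star V := hA.spectral_theorem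
  have hsV : star V * V = 1 := Matrix.mem_unitaryGroup_iff'.mp hA.eigenvectorUnitary.2
  have hsV' : ∀ X : Matrix (Fin n) (Fin n) ℂ, star V * (V * X) = X := by
    intro X; rw [← Matrix.mul_assoc, hsV, Matrix.one_mul]
  have htrD : D.trace = ∑ i, (hA.eigenvalues i : ℂ) := by
    simp [hD, Matrix.trace_diagonal]
  constructor
  · conv_lhs => rw [hst]
    rw [Matrix.mul_assoc, Matrix.trace_mul_comm, Matrix.mul_assoc, hsV, Matrix.mul_one, htrD]
  · have hAA : A * A = V * (D * (D * star V)) := by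
      rw [hst]; simp only [Matrix.mul_assoc, hsV']
    rw [hAA, Matrix.trace_mul_comm, Matrix.mul_assoc, Matrix.mul_assoc, hsV, Matrix.mul_one,
      hD, Matrix.diagonal_mul_diagonal, Matrix.trace_diagonal]
    simp [pow_two]

lemma aux_one_sub_psd {A : Matrix (Fin n) (Fin n) ℂ} (hA : A.PosSemidef)
    (htr : A.trace = 1) : (1 - A).PosSemidef := by
  set V : Matrix (Fin n) (Fin n) ℂ := (hA.1.eigenvectorUnitary : Matrix (Fin n) (Fin n) ℂ) with hV
  have hst : A = V * Matrix.diagonal (RCLike.ofReal ∘ hA.1.eigenvalues) * star V :=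
    hA.1.spectral_theorem
  have hVs : V * star V = 1 := Matrix.mem_unitaryGroup_iff.mp hA.1.eigenvectorUnitary.2
  have hsum : ∑ i, hA.1.eigenvalues i = 1 := by
    have := (aux_spectral hA.1).1
    rw [htr] at this
    have : ((1:ℝ):ℂ) = ((∑ i, hA.1.eigenvalues i : ℝ):ℂ) := by push_cast; rw [this]
    exact_mod_cast this.symm
  have hle : ∀ i, hA.1.eigenvalues i ≤ 1 := by
    intro i
    calc hA.1.eigenvalues i ≤ ∑ j, hA.1.eigenvalues j :=
          Finset.single_le_sum (fun j _ => hA.eigenvalues_nonneg j) (Finset.mem_univ i)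
      _ = 1 := hsum
  have key : 1 - A = V * Matrix.diagonal (fun i => ((1 - hA.1.eigenvalues i : ℝ) : ℂ)) * star V := by
    have : Matrix.diagonal (fun i => ((1 - hA.1.eigenvalues i : ℝ) : ℂ))
        = 1 - Matrix.diagonal (RCLike.ofReal ∘ hA.1.eigenvalues) := by
      rw [← Matrix.diagonal_one, Matrix.diagonal_sub]
      ext i
      push_cast
      simp
    rw [this, Matrix.mul_sub, Matrix.sub_mul, Matrix.mul_one, hVs, ← hst]
  rw [key]
  have hd : Matrix.PosSemidef (Matrix.diagonal (fun i => ((1 - hA.1.eigenvalues i : ℝ) : ℂ))) := by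
    apply Matrix.PosSemidef.diagonal
    intro i
    show (0:ℂ) ≤ ((1 - hA.1.eigenvalues i : ℝ) : ℂ)
    rw [Complex.zero_le_real]
    linarith [hle i]
  have := hd.mul_mul_conjTranspose_same V
  rwa [← Matrix.star_eq_conjTranspose] at this


lemma aux_trace_sq_le_one {A : Matrix (Fin n) (Fin n) ℂ} (hA : A.PosSemidef)
    (htr : A.trace = 1) : (A * A).trace ≤ 1 := by
  obtain ⟨h1, h2⟩ := aux_spectral hA.1
  have hsum : ∑ i, hA.1.eigenvalues i = 1 := by
    rw [htr] at h1
    have : ((1:ℝ):ℂ) = ((∑ i, hA.1.eigenvalues i : ℝ):ℂ) := by push_cast; rw [h1]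
    exact_mod_cast this.symm
  have hle : ∀ i, hA.1.eigenvalues i ≤ 1 := fun i =>
    (Finset.single_le_sum (fun j _ => hA.eigenvalues_nonneg j) (Finset.mem_univ i)).trans hsum.le
  have hsq : ∑ i, (hA.1.eigenvalues i)^2 ≤ 1 := by
    calc ∑ i, (hA.1.eigenvalues i)^2 ≤ ∑ i, hA.1.eigenvalues i := by
          apply Finset.sum_le_sum
          intro i _
          nlinarith [hA.eigenvalues_nonneg i, hle i]
      _ = 1 := hsum
  rw [h2]
  have : (∑ i, ((hA.1.eigenvalues i : ℂ))^2) = ((∑ i, (hA.1.eigenvalues i)^2 : ℝ) : ℂ) := by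
    push_cast; ring_nf
  rw [this]
  calc ((∑ i, (hA.1.eigenvalues i)^2 : ℝ) : ℂ) ≤ ((1:ℝ):ℂ) := by
        rw [Complex.real_le_real]; exact hsq
    _ = 1 := by norm_num


lemma aux_trace_nonneg {A : Matrix (Fin n) (Fin n) ℂ} (hA : A.PosSemidef) : 0 ≤ A.trace := by
  rw [Matrix.trace]
  apply Finset.sum_nonneg
  intro i _
  exact hA.diag_nonneg

open scoped MatrixOrder in
lemma aux_trace_mul_nonneg {A B : Matrix (Fin n) (Fin n) ℂ}
    (hA : A.PosSemidef) (hB : B.PosSemidef) : 0 ≤ (A * B).trace := by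
  have h1 : (A * B).trace = (CFC.sqrt A * B * CFC.sqrt A).trace := by
    conv_lhs => rw [← CFC.sqrt_mul_sqrt_self A hA.nonneg]
    rw [Matrix.mul_assoc, Matrix.trace_mul_comm]
  rw [h1]
  have h2 := hB.mul_mul_conjTranspose_same (CFC.sqrt A)
  rw [(CFC.sqrt_nonneg A).posSemidef.1.eq] at h2
  exact aux_trace_nonneg h2

open scoped MatrixOrder in
lemma aux_psd_trace_zero {M : Matrix (Fin n) (Fin n) ℂ} (hM : M.PosSemidef)
    (h : M.trace = 0) : M = 0 := by
  obtain ⟨B, hB⟩ := CStarAlgebra.nonneg_iff_eq_star_mul_self.mp hM.nonneg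
  rw [star_eq_conjTranspose] at hB
  subst hB
  suffices hB : B = 0 by simp [hB]
  have hdiag : ∀ j, (Bᴴ * B) j j = 0 := by
    intro j
    refine (Finset.sum_eq_zero_iff_of_nonneg (fun j _ => ?_)).mp h j (Finset.mem_univ j)
    show (0:ℂ) ≤ (Bᴴ * B).diag j
    have : (Bᴴ * B).diag j = dotProduct (star (fun i => B i j)) (fun i => B i j) := by
      simp [Matrix.mul_apply, dotProduct, Matrix.conjTranspose_apply, Matrix.diag]
    rw [this]
    exact dotProduct_star_self_nonneg _
  ext i j
  have h2 : dotProduct (star (fun i => B i j)) (fun i => B i j) = 0 := by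
    rw [← hdiag j]; simp [Matrix.mul_apply, dotProduct, Matrix.conjTranspose_apply]
  have := dotProduct_star_self_eq_zero.mp h2
  simpa using congr_fun this i

lemma aux_herm_sq_zero {A : Matrix (Fin n) (Fin n) ℂ} (hA : A.IsHermitian)
    (h : (A * A).trace = 0) : A = 0 := by
  have hpsd : (A * A).PosSemidef := by
    have := Matrix.posSemidef_conjTranspose_mul_self A
    rwa [hA.eq] at this
  exact aux_psd_trace_zero hpsd h |> fun h0 => by
    have := Matrix.conjTranspose_mul_self_eq_zero (A := A) |>.mp (by rwa [hA.eq])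
    exact this
/-- let `S` be an `ℝ`-linear subspace of the Hermitian `n × n`
complex matrices and `P` the orthogonal projection (for the trace inner product
`⟨A, B⟩ = tr (A * B)` on Hermitian matrices) onto `S`, characterized by:
`P A ∈ S` and `A - P A ⊥ S` for every Hermitian `A`.  If `ρ` is a density
matrix with `tr (ρ²) = 1` and `tr ((P ρ)²) = 1`, then `ρ` is generalized
unentangled relative to `S`: the functional `X ↦ tr (ρ X)` on `S` is an
extreme point of the convex set of functionals induced by density matrices. -/
theorem stmt_12 {n : ℕ} (S : Submodule ℝ (Matrix (Fin n) (Fin n) ℂ))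
    (hS : ∀ A ∈ S, A.IsHermitian)
    (P : Matrix (Fin n) (Fin n) ℂ → Matrix (Fin n) (Fin n) ℂ)
    (hP_mem : ∀ A : Matrix (Fin n) (Fin n) ℂ, A.IsHermitian → P A ∈ S)
    (hP_orth : ∀ A : Matrix (Fin n) (Fin n) ℂ, A.IsHermitian →
      ∀ X ∈ S, ((A - P A) * X).trace = 0)
    (ρ : Matrix (Fin n) (Fin n) ℂ)
    (hρ : ρ.PosSemidef) (hρtr : ρ.trace = 1)
    (hpure : (ρ * ρ).trace = 1)
    (hpurity : (P ρ * P ρ).trace = 1) :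
    (fun X : S => (ρ * (X : Matrix (Fin n) (Fin n) ℂ)).trace) ∈
      Set.extremePoints ℝ
        {f : S → ℂ | ∃ σ : Matrix (Fin n) (Fin n) ℂ, σ.PosSemidef ∧ σ.trace = 1 ∧
          f = fun X : S => (σ * (X : Matrix (Fin n) (Fin n) ℂ)).trace} := by
  have hH := hρ.1
  have hPmem := hP_mem ρ hH
  have hPH := hS _ hPmem
  -- Step 1: ρ ∈ S
  have horth := hP_orth ρ hH (P ρ) hPmem
  have hρP : (ρ * P ρ).trace = 1 := by
    rw [Matrix.sub_mul, Matrix.trace_sub, hpurity] at horth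
    have := sub_eq_zero.mp horth
    rw [this]
  have hPρ : (P ρ * ρ).trace = 1 := by rw [Matrix.trace_mul_comm]; exact hρP
  have hΔ : ((ρ - P ρ) * (ρ - P ρ)).trace = 0 := by
    rw [Matrix.sub_mul, Matrix.mul_sub, Matrix.mul_sub, Matrix.trace_sub, Matrix.trace_sub,
      Matrix.trace_sub, hpure, hpurity, hρP, hPρ]
    ring
  have hρeq : ρ = P ρ := by
    have := aux_herm_sq_zero (hH.sub hPH) hΔ
    exact sub_eq_zero.mp this
  have hρS : ρ ∈ S := hρeq ▸ hPmem
  -- Key claim: any density matrix σ with tr(σρ) = 1 equals ρ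
  have key : ∀ σ : Matrix (Fin n) (Fin n) ℂ, σ.PosSemidef → σ.trace = 1 →
      (σ * ρ).trace = 1 → σ = ρ := by
    intro σ hσ hσtr h1
    have hρσ : (ρ * σ).trace = 1 := by rw [Matrix.trace_mul_comm]; exact h1
    have hsq : ((σ - ρ) * (σ - ρ)).trace = (σ * σ).trace - 1 := by
      rw [Matrix.sub_mul, Matrix.mul_sub, Matrix.mul_sub, Matrix.trace_sub, Matrix.trace_sub,
        Matrix.trace_sub, hpure, h1, hρσ]
      ring
    have hherm : (σ - ρ).IsHermitian := hσ.1.sub hρ.1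
    have h2 : (0:ℂ) ≤ ((σ - ρ) * (σ - ρ)).trace := by
      have hpsd := Matrix.posSemidef_conjTranspose_mul_self (σ - ρ)
      rw [hherm.eq] at hpsd
      exact aux_trace_nonneg hpsd
    have h3 : (σ * σ).trace ≤ 1 := aux_trace_sq_le_one hσ hσtr
    have h4 : ((σ - ρ) * (σ - ρ)).trace = 0 := by
      refine le_antisymm ?_ h2
      rw [hsq]
      exact sub_nonpos.mpr h3
    exact sub_eq_zero.mp (aux_herm_sq_zero hherm h4)
  -- bound: tr(σρ) ≤ 1 for any density σ
  have bound : ∀ σ : Matrix (Fin n) (Fin n) ℂ, σ.PosSemidef → σ.trace = 1 →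
      (σ * ρ).trace ≤ 1 := by
    intro σ hσ hσtr
    have h0 := aux_trace_mul_nonneg hσ (aux_one_sub_psd hρ hρtr)
    rw [Matrix.mul_sub, Matrix.trace_sub, Matrix.mul_one, hσtr] at h0
    exact sub_nonneg.mp h0
  refine ⟨⟨ρ, hρ, hρtr, rfl⟩, ?_⟩
  rintro f ⟨σ, hσ, hσtr, rfl⟩ g ⟨τ, hτ, hτtr, rfl⟩ ⟨a, b, ha, hb, hab, hsum⟩
  have heval := congr_fun hsum ⟨ρ, hρS⟩
  simp only [Pi.add_apply, Pi.smul_apply] at heval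
  rw [Complex.real_smul, Complex.real_smul] at heval
  have hab' : ((a:ℂ) + (b:ℂ)) = 1 := by exact_mod_cast hab
  have hax : (0:ℂ) ≤ (a:ℂ) * (1 - (σ * ρ).trace) :=
    mul_nonneg (by exact_mod_cast ha.le) (sub_nonneg.mpr (bound σ hσ hσtr))
  have hby : (0:ℂ) ≤ (b:ℂ) * (1 - (τ * ρ).trace) :=
    mul_nonneg (by exact_mod_cast hb.le) (sub_nonneg.mpr (bound τ hτ hτtr))
  have hzero : (a:ℂ) * (1 - (σ * ρ).trace) + (b:ℂ) * (1 - (τ * ρ).trace) = 0 := by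
    rw [hpure] at heval
    linear_combination hab' - heval
  obtain ⟨hz1, hz2⟩ := (add_eq_zero_iff_of_nonneg hax hby).mp hzero
  have ha0 : (a:ℂ) ≠ 0 := by exact_mod_cast ha.ne'
  have hb0 : (b:ℂ) ≠ 0 := by exact_mod_cast hb.ne'
  have hx : (σ * ρ).trace = 1 := by
    rcases mul_eq_zero.mp hz1 with h | h
    · exact absurd h ha0
    · linear_combination -h
  have hy : (τ * ρ).trace = 1 := by
    rcases mul_eq_zero.mp hz2 with h | h
    · exact absurd h hb0
    · linear_combination -h
  exact by rw [key σ hσ hσtr hx]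
end

section
/- Let S be an ℝ-linear subspace of the Hermitian n×n complex matrices, and let P_S be the orthogonal projection of the real inner product space of Hermitian matrices (with trace inner product ⟨A,B⟩ = tr(AB)) onto S. Let ρ be a density matrix whose purity relative to S is maximal: tr((P_S ρ)²) ≥ tr((P_S σ)²) for every density matrix σ. Then P_S ρ is an extreme point of the convex set {P_S σ : σ a density matrix}; that is, ρ is generalized unentangled relative to S. -/
open scoped ComplexOrder

/-- For a Hermitian matrix `Z`, `tr (Z * Z)` equals the (real, nonnegative)
sum of squared moduli of the entries of `Z`. -/
lemma herm_trace_sq {n : ℕ} (Z : Matrix (Fin n) (Fin n) ℂ) (hZ : Z.IsHermitian) :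
    (Z * Z).trace = ((∑ i, ∑ j, Complex.normSq (Z i j) : ℝ) : ℂ) := by
  rw [Matrix.trace]
  push_cast
  refine Finset.sum_congr rfl fun i _ => ?_
  rw [Matrix.diag_apply, Matrix.mul_apply]
  refine Finset.sum_congr rfl fun j _ => ?_
  rw [show Z j i = star (Z i j) by rw [← hZ.apply i j]; exact (star_star _).symm]
  exact (Complex.mul_conj (Z i j))

/-- The parallelogram-type trace identity for convex combinations. -/
lemma trace_convex_identity {n : ℕ} (x y : Matrix (Fin n) (Fin n) ℂ) (a b : ℝ)
    (hab : a + b = 1) :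
    (a:ℂ) * (x*x).trace + (b:ℂ) * (y*y).trace - ((a•x+b•y)*(a•x+b•y)).trace
      = (a:ℂ)*(b:ℂ) * ((x-y)*(x-y)).trace := by
  obtain rfl : b = 1 - a := by linarith
  simp only [Matrix.add_mul, Matrix.mul_add, Matrix.sub_mul, Matrix.mul_sub,
    smul_mul_assoc, mul_smul_comm, Matrix.trace_add, Matrix.trace_sub,
    Matrix.trace_smul, smul_smul, Complex.real_smul]
  rw [Matrix.trace_mul_comm y x]
  push_cast
  ring

/-- let `S` be an `ℝ`-linear subspace of the Hermitian `n × n`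
complex matrices and `P` the orthogonal projection (for the trace inner product
`⟨A, B⟩ = tr (A * B)` on Hermitian matrices) onto `S`.  If `ρ` is a density
matrix of maximal purity relative to `S`, i.e. `tr ((P ρ)²) ≥ tr ((P σ)²)` for
every density matrix `σ` (the traces being real since `P σ` is Hermitian), then
`P ρ` is an extreme point of the convex set `{P σ : σ a density matrix}`; that
is, `ρ` is generalized unentangled relative to `S`. -/
theorem stmt_13 {n : ℕ} (S : Submodule ℝ (Matrix (Fin n) (Fin n) ℂ))
    (hS : ∀ A ∈ S, A.IsHermitian)
    (P : Matrix (Fin n) (Fin n) ℂ → Matrix (Fin n) (Fin n) ℂ)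
    (hP_mem : ∀ A : Matrix (Fin n) (Fin n) ℂ, A.IsHermitian → P A ∈ S)
    (hP_orth : ∀ A : Matrix (Fin n) (Fin n) ℂ, A.IsHermitian →
      ∀ X ∈ S, ((A - P A) * X).trace = 0)
    (ρ : Matrix (Fin n) (Fin n) ℂ)
    (hρ : ρ.PosSemidef) (hρtr : ρ.trace = 1)
    (hmax : ∀ σ : Matrix (Fin n) (Fin n) ℂ, σ.PosSemidef → σ.trace = 1 →
      ((P σ * P σ).trace).re ≤ ((P ρ * P ρ).trace).re) :
    P ρ ∈ Set.extremePoints ℝ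
      {M : Matrix (Fin n) (Fin n) ℂ | ∃ σ : Matrix (Fin n) (Fin n) ℂ,
        σ.PosSemidef ∧ σ.trace = 1 ∧ M = P σ} := by
  refine ⟨⟨ρ, hρ, hρtr, rfl⟩, ?_⟩
  rintro x ⟨σ₁, h1, h1t, rfl⟩ y ⟨σ₂, h2, h2t, rfl⟩ hseg
  obtain ⟨a, b, ha, hb, hab, hxy⟩ := hseg
  -- Hermitianness of the projections
  have hd : (P σ₁ - P σ₂).IsHermitian :=
    (hS _ (hP_mem σ₁ h1.isHermitian)).sub (hS _ (hP_mem σ₂ h2.isHermitian))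
  -- key trace identity
  have key := trace_convex_identity (P σ₁) (P σ₂) a b hab
  rw [hxy, herm_trace_sq _ hd] at key
  -- take real parts
  have keyre := congrArg Complex.re key
  simp only [Complex.add_re, Complex.sub_re, Complex.mul_re, Complex.ofReal_re,
    Complex.ofReal_im, Complex.mul_im, zero_mul, mul_zero, sub_zero, zero_add,
    add_zero, zero_sub, neg_zero] at keyre
  -- the sum of squared moduli of the difference is nonneg; maximality forces it ≤ 0
  set D : ℝ := ∑ i, ∑ j, Complex.normSq ((P σ₁ - P σ₂) i j) with hD
  have hDnonneg : 0 ≤ D :=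
    Finset.sum_nonneg fun i _ => Finset.sum_nonneg fun j _ => Complex.normSq_nonneg _
  have h1le := hmax σ₁ h1 h1t
  have h2le := hmax σ₂ h2 h2t
  have hDzero : D = 0 := by
    have h1' := mul_le_mul_of_nonneg_left h1le ha.le
    have h2' := mul_le_mul_of_nonneg_left h2le hb.le
    have hsum : a * (P ρ * P ρ).trace.re + b * (P ρ * P ρ).trace.re
        = (P ρ * P ρ).trace.re := by rw [← add_mul, hab, one_mul]
    have habD : a * b * D ≤ 0 := by linarith
    nlinarith [mul_pos ha hb]
  -- hence P σ₁ = P σ₂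
  have heq : P σ₁ = P σ₂ := by
    ext i j
    have hij : Complex.normSq ((P σ₁ - P σ₂) i j) = 0 := by
      have := (Finset.sum_eq_zero_iff_of_nonneg
        (fun i _ => Finset.sum_nonneg fun j _ => Complex.normSq_nonneg _)).mp hDzero i (Finset.mem_univ i)
      exact (Finset.sum_eq_zero_iff_of_nonneg
        (fun j _ => Complex.normSq_nonneg _)).mp this j (Finset.mem_univ j)
    have : (P σ₁ - P σ₂) i j = 0 := by
      simpa using Complex.normSq_eq_zero.mp hij
    have := sub_eq_zero.mp (by simpa [Matrix.sub_apply] using this)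
    exact this
  -- conclude
  have hPρ : P ρ = P σ₁ := by
    rw [← hxy, heq, ← add_smul, hab, one_smul]
  exact hPρ.symm
end

section
/- Let h be a complex Lie subalgebra of the n×n complex matrices that is closed under conjugate transpose, contains the identity matrix, and acts irreducibly on ℂⁿ. Let ρ be a density matrix with tr(ρ²) = 1 (a pure state), and suppose ρ has maximal purity relative to the real subspace Re(h) of Hermitian elements of h: tr((P ρ)²) ≥ tr((P σ)²) for every density matrix σ, where P is the orthogonal projection of the Hermitian matrices (with trace inner product) onto Re(h). Then ρ is generalized unentangled relative to h: the functional λ_ρ : h → ℂ, X ↦ tr(ρX), is an extreme point of the set {λ_σ : σ a density matrix}. -/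
open scoped ComplexOrder
open Matrix

attribute [local instance 100] LieRing.ofAssociativeRing

lemma aux_re {n : ℕ} (A : Matrix (Fin n) (Fin n) ℂ) :
    ((Aᴴ * A).trace).re = ∑ j, ∑ i, Complex.normSq (A i j) := by
  simp only [Matrix.trace, Matrix.diag, Matrix.mul_apply, Matrix.conjTranspose_apply]
  rw [Complex.re_sum]
  refine Finset.sum_congr rfl fun j _ => ?_
  rw [Complex.re_sum]
  refine Finset.sum_congr rfl fun i _ => ?_
  rw [Complex.star_def, ← Complex.normSq_eq_conj_mul_self]
  simp

lemma aux_nonneg {n : ℕ} (A : Matrix (Fin n) (Fin n) ℂ) :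
    0 ≤ ((Aᴴ * A).trace).re := by
  rw [aux_re]
  exact Finset.sum_nonneg fun j _ => Finset.sum_nonneg fun i _ => Complex.normSq_nonneg _

lemma aux_eq_zero {n : ℕ} (A : Matrix (Fin n) (Fin n) ℂ)
    (hA : ((Aᴴ * A).trace).re = 0) : A = 0 := by
  rw [aux_re] at hA
  ext i j
  have h1 : ∀ j ∈ (Finset.univ : Finset (Fin n)),
      (0:ℝ) ≤ ∑ i, Complex.normSq (A i j) :=
    fun j _ => Finset.sum_nonneg fun i _ => Complex.normSq_nonneg _
  have h2 := (Finset.sum_eq_zero_iff_of_nonneg h1).mp hA j (Finset.mem_univ j)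
  have h3 : ∀ i ∈ (Finset.univ : Finset (Fin n)),
      (0:ℝ) ≤ Complex.normSq (A i j) := fun i _ => Complex.normSq_nonneg _
  have h4 := (Finset.sum_eq_zero_iff_of_nonneg h3).mp h2 i (Finset.mem_univ i)
  simpa using Complex.normSq_eq_zero.mp h4


/-- let `h` be a complex Lie subalgebra of the `n × n` complex
matrices, closed under conjugate transpose, containing the identity, and acting
irreducibly on `ℂⁿ`.  Let `P` be the orthogonal projection (for the trace inner
product on Hermitian matrices) onto the real subspace `Re h` of Hermitian
elements of `h`.  If `ρ` is a density matrix with `tr (ρ²) = 1` of maximal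
purity relative to `Re h` among density matrices, then `ρ` is generalized
unentangled relative to `h`: the functional `λ_ρ : X ↦ tr (ρ X)` on `h` is an
extreme point of the set of functionals induced by density matrices. -/
theorem stmt_15 {n : ℕ} (h : LieSubalgebra ℂ (Matrix (Fin n) (Fin n) ℂ))
    (hstar : ∀ A ∈ h, A.conjTranspose ∈ h)
    (hone : (1 : Matrix (Fin n) (Fin n) ℂ) ∈ h)
    (hirr : ∀ U : Submodule ℂ (Fin n → ℂ),
      (∀ A ∈ h, ∀ v ∈ U, A.mulVec v ∈ U) → U = ⊥ ∨ U = ⊤)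
    (P : Matrix (Fin n) (Fin n) ℂ → Matrix (Fin n) (Fin n) ℂ)
    (hP_mem : ∀ A : Matrix (Fin n) (Fin n) ℂ, A.IsHermitian →
      P A ∈ h ∧ (P A).IsHermitian)
    (hP_orth : ∀ A : Matrix (Fin n) (Fin n) ℂ, A.IsHermitian →
      ∀ X ∈ h, X.IsHermitian → ((A - P A) * X).trace = 0)
    (ρ : Matrix (Fin n) (Fin n) ℂ)
    (hρ : ρ.PosSemidef) (hρtr : ρ.trace = 1)
    (hpure : (ρ * ρ).trace = 1)
    (hmax : ∀ σ : Matrix (Fin n) (Fin n) ℂ, σ.PosSemidef → σ.trace = 1 →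
      ((P σ * P σ).trace).re ≤ ((P ρ * P ρ).trace).re) :
    (fun X : h => (ρ * (X : Matrix (Fin n) (Fin n) ℂ)).trace) ∈
      Set.extremePoints ℝ
        {f : h → ℂ | ∃ σ : Matrix (Fin n) (Fin n) ℂ, σ.PosSemidef ∧ σ.trace = 1 ∧
          f = fun X : h => (σ * (X : Matrix (Fin n) (Fin n) ℂ)).trace} := by
  constructor
  · exact ⟨ρ, hρ, hρtr, rfl⟩
  rintro f₁ ⟨σ₁, hσ₁, hσ₁tr, rfl⟩ f₂ ⟨σ₂, hσ₂, hσ₂tr, rfl⟩ ⟨s, t, hs, ht, hst, heq⟩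
  -- the projection reproduces traces against hermitian elements of h
  have key : ∀ σ : Matrix (Fin n) (Fin n) ℂ, σ.IsHermitian →
      ∀ X ∈ h, X.IsHermitian → (σ * X).trace = (P σ * X).trace := by
    intro σ hσ X hX hXh
    have h0 := hP_orth σ hσ X hX hXh
    rw [Matrix.sub_mul, Matrix.trace_sub] at h0
    exact sub_eq_zero.mp h0
  obtain ⟨ha_mem, ha_h⟩ := hP_mem σ₁ hσ₁.1
  obtain ⟨hb_mem, hb_h⟩ := hP_mem σ₂ hσ₂.1
  obtain ⟨hp_mem, hp_h⟩ := hP_mem ρ hρ.1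
  set a := P σ₁ with ha_def
  set b := P σ₂ with hb_def
  set p := P ρ with hp_def
  have hval : ∀ X ∈ h, (s:ℂ) * (σ₁ * X).trace + (t:ℂ) * (σ₂ * X).trace
      = (ρ * X).trace := by
    intro X hX
    have := congrFun heq ⟨X, hX⟩
    simpa [Complex.real_smul] using this
  have hsmul_herm : ∀ (r : ℝ) (A : Matrix (Fin n) (Fin n) ℂ), A.IsHermitian →
      ((r:ℂ) • A).IsHermitian := by
    intro r A hA
    unfold Matrix.IsHermitian at *
    rw [Matrix.conjTranspose_smul, hA, Complex.star_def, Complex.conj_ofReal]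
  -- the projections combine: p = s • a + t • b
  set d := p - (s:ℂ) • a - (t:ℂ) • b with hd_def
  have hd_mem : d ∈ h :=
    h.sub_mem (h.sub_mem hp_mem (h.smul_mem _ ha_mem)) (h.smul_mem _ hb_mem)
  have hd_h : d.IsHermitian :=
    (hp_h.sub (hsmul_herm s a ha_h)).sub (hsmul_herm t b hb_h)
  have hdX : ∀ X ∈ h, X.IsHermitian → (d * X).trace = 0 := by
    intro X hX hXh
    have e1 := key σ₁ hσ₁.1 X hX hXh
    have e2 := key σ₂ hσ₂.1 X hX hXh
    have e3 := key ρ hρ.1 X hX hXh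
    rw [← ha_def] at e1
    rw [← hb_def] at e2
    rw [← hp_def] at e3
    have e4 := hval X hX
    rw [hd_def, Matrix.sub_mul, Matrix.sub_mul, Matrix.smul_mul, Matrix.smul_mul,
      Matrix.trace_sub, Matrix.trace_sub, Matrix.trace_smul, Matrix.trace_smul,
      smul_eq_mul, smul_eq_mul]
    linear_combination -e4 - e3 + (s:ℂ) * e1 + (t:ℂ) * e2
  have hd0 : d = 0 := by
    apply aux_eq_zero
    have : (dᴴ * d).trace = 0 := by
      rw [hd_h.eq]; exact hdX d hd_mem hd_h
    rw [this]; simp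
  have hp_eq : p = (s:ℂ) • a + (t:ℂ) • b := by
    have := sub_eq_zero.mp (by rw [← sub_sub]; exact hd0 :
      p - ((s:ℂ) • a + (t:ℂ) • b) = 0)
    exact this
  -- purity comparison forces a = b = p
  have hqa : ((a * a).trace).re ≤ ((p * p).trace).re := hmax σ₁ hσ₁ hσ₁tr
  have hqb : ((b * b).trace).re ≤ ((p * p).trace).re := hmax σ₂ hσ₂ hσ₂tr
  have hexp : (p * p).trace = ((s^2 : ℝ):ℂ) * (a * a).trace
      + ((2*s*t : ℝ):ℂ) * (a * b).trace + ((t^2 : ℝ):ℂ) * (b * b).trace := by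
    rw [hp_eq]
    simp only [Matrix.add_mul, Matrix.mul_add, Matrix.smul_mul, Matrix.mul_smul,
      Matrix.trace_add, Matrix.trace_smul, smul_eq_mul]
    rw [Matrix.trace_mul_comm b a]
    push_cast
    ring
  have hexp_re : ((p * p).trace).re = s^2 * ((a * a).trace).re
      + (2*s*t) * ((a * b).trace).re + t^2 * ((b * b).trace).re := by
    rw [hexp]
    simp only [Complex.add_re, Complex.re_ofReal_mul]
  have heexp : ((a - b) * (a - b)).trace = (a * a).trace
      - ((2:ℝ):ℂ) * (a * b).trace + (b * b).trace := by
    rw [Matrix.sub_mul, Matrix.mul_sub, Matrix.mul_sub, Matrix.trace_sub, Matrix.trace_sub,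
      Matrix.trace_sub, Matrix.trace_mul_comm b a]
    push_cast
    ring
  have heexp_re : (((a - b) * (a - b)).trace).re = ((a * a).trace).re
      - 2 * ((a * b).trace).re + ((b * b).trace).re := by
    rw [heexp]
    simp only [Complex.add_re, Complex.sub_re, Complex.re_ofReal_mul]
  have he_h : (a - b).IsHermitian := ha_h.sub hb_h
  have he_nonneg : 0 ≤ (((a - b) * (a - b)).trace).re := by
    have := aux_nonneg (a - b)
    rwa [he_h.eq] at this
  have hid : 1 - s^2 - t^2 = 2*s*t := by linear_combination (-(1 + s + t)) * hst
  have h1 : s^2 * ((a * a).trace).re ≤ s^2 * ((p * p).trace).re :=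
    mul_le_mul_of_nonneg_left hqa (sq_nonneg s)
  have h2 : t^2 * ((b * b).trace).re ≤ t^2 * ((p * p).trace).re :=
    mul_le_mul_of_nonneg_left hqb (sq_nonneg t)
  have hip : ((p * p).trace).re ≤ ((a * b).trace).re := by
    have hst2 : 0 < 2 * s * t := by positivity
    have hid3 : ((p * p).trace).re - s^2 * ((p * p).trace).re - t^2 * ((p * p).trace).re
        = 2*s*t * ((p * p).trace).re := by linear_combination ((p * p).trace).re * hid
    have hle : (2*s*t) * ((p * p).trace).re ≤ (2*s*t) * ((a * b).trace).re := by
      linarith [hexp_re, h1, h2, hid3]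
    exact le_of_mul_le_mul_left hle hst2
  have he_zero : (((a - b) * (a - b)).trace).re = 0 := by
    linarith
  have hab : a = b := by
    have := aux_eq_zero (a - b) (by rwa [he_h.eq])
    exact sub_eq_zero.mp this
  have hpa : p = a := by
    rw [hp_eq, ← hab, ← add_smul]
    norm_cast
    rw [hst, one_smul]
  -- conclude equality of functionals
  have main : ∀ σ : Matrix (Fin n) (Fin n) ℂ, σ.IsHermitian → P σ = p →
      (fun X : h => (σ * (X : Matrix (Fin n) (Fin n) ℂ)).trace)
        = fun X : h => (ρ * (X : Matrix (Fin n) (Fin n) ℂ)).trace := by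
    intro σ hσh hPσ
    funext X
    obtain ⟨X, hX⟩ := X
    set A := (2⁻¹:ℂ) • (X + Xᴴ) with hA_def
    set B := (-(Complex.I)/2) • (X - Xᴴ) with hB_def
    have hA_mem : A ∈ h := h.smul_mem _ (h.add_mem hX (hstar X hX))
    have hB_mem : B ∈ h := h.smul_mem _ (h.sub_mem hX (hstar X hX))
    have hA_h : A.IsHermitian := by
      unfold Matrix.IsHermitian
      rw [hA_def, Matrix.conjTranspose_smul, Matrix.conjTranspose_add,
        Matrix.conjTranspose_conjTranspose]
      have : star (2⁻¹ : ℂ) = 2⁻¹ := by simp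
      rw [this, add_comm]
    have hB_h : B.IsHermitian := by
      unfold Matrix.IsHermitian
      rw [hB_def, Matrix.conjTranspose_smul, Matrix.conjTranspose_sub,
        Matrix.conjTranspose_conjTranspose]
      have : star (-(Complex.I)/2) = Complex.I/2 := by
        simp [Complex.star_def]
      rw [this]
      module
    have hI : Complex.I * (-(Complex.I)/2) = 2⁻¹ := by
      have hsq := Complex.I_sq
      linear_combination (-1/2 : ℂ) * hsq
    have hXdec : X = A + Complex.I • B := by
      rw [hA_def, hB_def, smul_smul, hI]
      module
    have t1 : (σ * A).trace = (ρ * A).trace := by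
      rw [key σ hσh A hA_mem hA_h, key ρ hρ.1 A hA_mem hA_h, hPσ]
    have t2 : (σ * B).trace = (ρ * B).trace := by
      rw [key σ hσh B hB_mem hB_h, key ρ hρ.1 B hB_mem hB_h, hPσ]
    calc (σ * X).trace = (σ * A).trace + Complex.I * (σ * B).trace := by
          conv_lhs => rw [hXdec]
          simp only [Matrix.mul_add, Matrix.mul_smul, Matrix.trace_add, Matrix.trace_smul,
            smul_eq_mul]
      _ = (ρ * A).trace + Complex.I * (ρ * B).trace := by rw [t1, t2]
      _ = (ρ * X).trace := by
          conv_rhs => rw [hXdec]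
          simp only [Matrix.mul_add, Matrix.mul_smul, Matrix.trace_add, Matrix.trace_smul,
            smul_eq_mul]
  exact main σ₁ hσ₁.1 (by show a = p; exact hpa.symm)
end
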